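/- arXiv:1012.1346 — 3 statements merged into one kernel-verified Lean document; each statement's English description precedes it below -/
import Mathlib

section
/- Let d ≥ 2, 1 < p < 2d/(d-1), and let q = q(p,d) be defined by 1/q = ((d-1)/(d+1))(1 - 1/p). Let f ∈ L^p(ℝ^{d-1}) be such that |Ef|^{q-1} is integrable over ℝ^d, where Ef(x,t) = ∫_{ℝ^{d-1}} e^{-i x·y} e^{-i t|y|²/2} f(y) dy, and suppose there is λ ∈ ℂ such that for almost every y ∈ ℝ^{d-1}: ∫_{ℝ^d} e^{i(x·y + t|y|²/2)} |Ef(x,t)|^{q-2} Ef(x,t) dx dt = λ |f(y)|^{p-2} f(y). Then for every ρ ∈ ℂ∖{0}, every r > 0, every orthogonal matrix A ∈ O(d-1), and every v, w ∈ ℝ^{d-1}, the function g(y) = ρ f(rAy + v) e^{i y·w} also belongs to L^p(ℝ^{d-1}), |Eg|^{q-1} is integrable over ℝ^d, and there is λ' ∈ ℂ such that for almost every y ∈ ℝ^{d-1}: ∫_{ℝ^d} e^{i(x·y + t|y|²/2)} |Eg(x,t)|^{q-2} Eg(x,t) dx dt = λ' |g(y)|^{p-2} g(y). -/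
open MeasureTheory Complex
open scoped ENNReal RealInnerProductSpace

/-- The adjoint Fourier restriction (extension) operator of the paraboloid
`P^{n} = {(y, |y|²/2) : y ∈ ℝ^{n}} ⊂ ℝ^{n+1}`, viewed as an operator on functions
on `ℝ^{n}`: `Ef(x,t) = ∫ e^{-ix·y} e^{-it|y|²/2} f(y) dy`. -/
noncomputable def parExt (n : ℕ) (f : EuclideanSpace ℝ (Fin n) → ℂ) :
    EuclideanSpace ℝ (Fin n) × ℝ → ℂ :=
  fun z => ∫ y : EuclideanSpace ℝ (Fin n),
    Complex.exp (-(Complex.I * ((⟪z.1, y⟫ : ℝ) : ℂ))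
      - Complex.I * (z.2 : ℂ) * ((‖y‖ ^ 2 : ℝ) : ℂ) / 2) * f y

namespace ELSymAux

section prodsmul

variable {α β : Type*} [MeasurableSpace α] [MeasurableSpace β]

lemma smul_prod_meas (c : ℝ≥0∞) (μ : Measure α) (ν : Measure β) [SFinite μ] [SFinite ν] :
    (c • μ).prod ν = c • (μ.prod ν) := by
  ext s hs
  rw [Measure.smul_apply, Measure.prod_apply hs, Measure.prod_apply hs,
    lintegral_smul_measure]

lemma prod_smul_meas (c : ℝ≥0∞) (hc : c ≠ ⊤) (μ : Measure α) (ν : Measure β)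
    [SFinite μ] [SFinite ν] :
    μ.prod (c • ν) = c • (μ.prod ν) := by
  ext s hs
  rw [Measure.smul_apply, Measure.prod_apply hs, Measure.prod_apply hs, smul_eq_mul,
    ← lintegral_const_mul' _ _ hc]
  simp only [Measure.smul_apply, smul_eq_mul]

end prodsmul

noncomputable section

variable {n : ℕ}

local notation "Euc" => EuclideanSpace ℝ (Fin n)

/-- The affine map `y ↦ r • A y + v`. -/
def hAff (r : ℝ) (A : Euc ≃ₗᵢ[ℝ] Euc) (v : Euc) (y : Euc) : Euc := r • A y + v

/-- The induced transformation on `ℝⁿ × ℝ`. -/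
def psi (r : ℝ) (A : Euc ≃ₗᵢ[ℝ] Euc) (v w : Euc) (z : Euc × ℝ) : Euc × ℝ :=
  (r⁻¹ • A z.1 - (r⁻¹ * r⁻¹ * z.2) • v - r⁻¹ • A w, r⁻¹ * r⁻¹ * z.2)

/-- The phase correction. -/
def theta (r : ℝ) (A : Euc ≃ₗᵢ[ℝ] Euc) (v w : Euc) (z : Euc × ℝ) : ℝ :=
  r⁻¹ * ⟪A z.1, v⟫ - (r⁻¹ * r⁻¹ * z.2) * (‖v‖ ^ 2 / 2) - r⁻¹ * ⟪v, A w⟫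

lemma phase_eq (r : ℝ) (hr : r ≠ 0) (A : Euc ≃ₗᵢ[ℝ] Euc) (v w : Euc)
    (z : Euc × ℝ) (y : Euc) :
    ⟪z.1, y⟫ + z.2 * (‖y‖ ^ 2 / 2) + theta r A v w z
      = ⟪y, w⟫ + ⟪(psi r A v w z).1, hAff r A v y⟫
        + (psi r A v w z).2 * (‖hAff r A v y‖ ^ 2 / 2) := by
  simp only [theta, psi, hAff]
  rw [norm_add_sq_real, norm_smul]
  simp only [inner_sub_left, inner_add_right, real_inner_smul_left, real_inner_smul_right,
    LinearIsometryEquiv.inner_map_map, LinearIsometryEquiv.norm_map, real_inner_self_eq_norm_sq,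
    Real.norm_eq_abs, mul_pow, sq_abs]
  rw [real_inner_comm w y, real_inner_comm (A y) v, real_inner_comm (A w) v]
  field_simp
  ring

/-- `psi` as a measurable equivalence. -/
def psiME (r : ℝ) (hr : r ≠ 0) (A : Euc ≃ₗᵢ[ℝ] Euc) (v w : Euc) :
    (Euc × ℝ) ≃ᵐ (Euc × ℝ) where
  toEquiv :=
  { toFun := psi r A v w
    invFun := fun z => (r • A.symm z.1 + (r * z.2) • A.symm v + w, r * r * z.2)
    left_inv := by
      intro z
      simp only [psi, map_sub, LinearIsometryEquiv.map_smul,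
        LinearIsometryEquiv.symm_apply_apply]
      refine Prod.ext ?_ ?_
      · match_scalars <;> field_simp <;> ring
      · show r * r * (r⁻¹ * r⁻¹ * z.2) = z.2
        field_simp
    right_inv := by
      intro z
      simp only [psi, map_add, LinearIsometryEquiv.map_smul,
        LinearIsometryEquiv.apply_symm_apply]
      refine Prod.ext ?_ ?_
      · match_scalars <;> field_simp <;> ring
      · show r⁻¹ * r⁻¹ * (r * r * z.2) = z.2
        field_simp }
  measurable_toFun := by
    show Measurable (psi r A v w)
    have : Continuous (psi r A v w) := by
      unfold psi
      fun_prop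
    exact this.measurable
  measurable_invFun := by
    show Measurable fun z : Euc × ℝ => (r • A.symm z.1 + (r * z.2) • A.symm v + w, r * r * z.2)
    have : Continuous fun z : Euc × ℝ =>
        (r • A.symm z.1 + (r * z.2) • A.symm v + w, r * r * z.2) := by fun_prop
    exact this.measurable

/-- `hAff` as a measurable equivalence. -/
def hAffME (r : ℝ) (hr : r ≠ 0) (A : Euc ≃ₗᵢ[ℝ] Euc) (v : Euc) : Euc ≃ᵐ Euc where
  toEquiv :=
  { toFun := hAff r A v
    invFun := fun u => r⁻¹ • A.symm (u - v)
    left_inv := by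
      intro y
      simp only [hAff, add_sub_cancel_right, LinearIsometryEquiv.map_smul,
        LinearIsometryEquiv.symm_apply_apply, smul_smul]
      rw [inv_mul_cancel₀ hr, one_smul]
    right_inv := by
      intro u
      simp only [hAff, LinearIsometryEquiv.map_smul, LinearIsometryEquiv.apply_symm_apply,
        smul_smul]
      rw [mul_inv_cancel₀ hr, one_smul, sub_add_cancel] }
  measurable_toFun := by
    show Measurable (hAff r A v)
    have : Continuous (hAff r A v) := by unfold hAff; fun_prop
    exact this.measurable
  measurable_invFun := by
    show Measurable fun u : Euc => r⁻¹ • A.symm (u - v)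
    have : Continuous fun u : Euc => r⁻¹ • A.symm (u - v) := by fun_prop
    exact this.measurable

lemma measurePreserving_hAff (r : ℝ) (hr : 0 < r) (A : Euc ≃ₗᵢ[ℝ] Euc) (v : Euc) :
    MeasurePreserving (hAff r A v) volume (ENNReal.ofReal ((r ^ n)⁻¹) • volume) := by
  have hr' : r ≠ 0 := hr.ne'
  have mpA : MeasurePreserving (⇑A) (volume : Measure Euc) volume := A.measurePreserving
  have mpS : MeasurePreserving (fun x : Euc => r • x) volume
      (ENNReal.ofReal ((r ^ n)⁻¹) • volume) := by
    refine ⟨by fun_prop, ?_⟩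
    rw [MeasureTheory.Measure.map_addHaar_smul volume hr']
    congr 1
    rw [finrank_euclideanSpace_fin]
    rw [abs_of_pos (by positivity)]
  have mpT : MeasurePreserving (fun x : Euc => x + v)
      (ENNReal.ofReal ((r ^ n)⁻¹) • (volume : Measure Euc))
      (ENNReal.ofReal ((r ^ n)⁻¹) • volume) := by
    refine ⟨by fun_prop, ?_⟩
    rw [Measure.map_smul, (measurePreserving_add_right volume v).map_eq]
  have := mpT.comp (mpS.comp mpA)
  exact this

lemma quasiMeasurePreserving_hAff (r : ℝ) (hr : 0 < r) (A : Euc ≃ₗᵢ[ℝ] Euc) (v : Euc) :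
    Measure.QuasiMeasurePreserving (hAff r A v) volume volume := by
  refine ⟨(measurePreserving_hAff r hr A v).measurable, ?_⟩
  rw [(measurePreserving_hAff r hr A v).map_eq]
  exact Measure.smul_absolutelyContinuous

lemma integral_comp_hAff (r : ℝ) (hr : 0 < r) (A : Euc ≃ₗᵢ[ℝ] Euc) (v : Euc)
    (K : Euc → ℂ) :
    ∫ y, K (hAff r A v y) = ((r ^ n : ℝ)⁻¹) • ∫ y, K y := by
  rw [(measurePreserving_hAff r hr A v).integral_comp
      (hAffME r hr.ne' A v).measurableEmbedding K]
  rw [integral_smul_measure, ENNReal.toReal_ofReal (by positivity)]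

lemma memLp_comp_hAff (r : ℝ) (hr : 0 < r) (A : Euc ≃ₗᵢ[ℝ] Euc) (v : Euc)
    {P : ℝ≥0∞} (hP : P ≠ ⊤) {f : Euc → ℂ} (hf : MemLp f P volume) :
    MemLp (fun y => f (hAff r A v y)) P volume := by
  have h1 : MemLp f P (ENNReal.ofReal ((r ^ n)⁻¹) • volume) := by
    refine ⟨hf.1.smul_measure _, ?_⟩
    rw [eLpNorm_smul_measure_of_ne_top hP, smul_eq_mul]
    exact ENNReal.mul_lt_top
      (ENNReal.rpow_lt_top_of_nonneg (by positivity) ENNReal.ofReal_ne_top) hf.2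
  exact h1.comp_measurePreserving (measurePreserving_hAff r hr A v)

lemma measurePreserving_psi (r : ℝ) (hr : 0 < r) (A : Euc ≃ₗᵢ[ℝ] Euc) (v w : Euc) :
    MeasurePreserving (psi r A v w) (volume : Measure (Euc × ℝ))
      (ENNReal.ofReal (r ^ n * (r * r)) • volume) := by
  have hr' : r ≠ 0 := hr.ne'
  have mpR : MeasurePreserving (Prod.map (⇑A) (id : ℝ → ℝ))
      ((volume : Measure Euc).prod (volume : Measure ℝ)) (volume.prod volume) :=
    A.measurePreserving.prod (MeasurePreserving.id _)
  have mpTR : MeasurePreserving (fun z : Euc × ℝ => z - (A w, (0 : ℝ)))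
      ((volume : Measure Euc).prod (volume : Measure ℝ)) (volume.prod volume) :=
    measurePreserving_sub_right _ _
  have mpSH' : MeasurePreserving (fun p : ℝ × Euc => (p.1, p.2 - p.1 • (r⁻¹ • v)))
      ((volume : Measure ℝ).prod (volume : Measure Euc)) (volume.prod volume) := by
    refine MeasurePreserving.skew_product (MeasurePreserving.id _) ?_
      (Filter.Eventually.of_forall fun a =>
        (measurePreserving_sub_right volume (a • (r⁻¹ • v))).map_eq)
    show Measurable fun p : ℝ × Euc => p.2 - p.1 • (r⁻¹ • v)
    have : Continuous fun p : ℝ × Euc => p.2 - p.1 • (r⁻¹ • v) := by fun_prop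
    exact this.measurable
  have mpSH : MeasurePreserving (fun z : Euc × ℝ => (z.1 - z.2 • (r⁻¹ • v), z.2))
      ((volume : Measure Euc).prod (volume : Measure ℝ)) (volume.prod volume) :=
    (Measure.measurePreserving_swap).comp (mpSH'.comp (Measure.measurePreserving_swap))
  have mpS1 : MeasurePreserving (fun z : Euc × ℝ => (r⁻¹ • z.1, z.2))
      ((volume : Measure Euc).prod (volume : Measure ℝ))
      ((ENNReal.ofReal (r ^ n) • volume).prod volume) := by
    refine MeasurePreserving.prod ⟨by fun_prop, ?_⟩ (MeasurePreserving.id _)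
    rw [MeasureTheory.Measure.map_addHaar_smul volume (inv_ne_zero hr')]
    congr 1
    rw [finrank_euclideanSpace_fin, inv_pow, inv_inv, abs_of_pos (by positivity)]
  have mpS2 : MeasurePreserving (fun z : Euc × ℝ => (z.1, r⁻¹ * r⁻¹ * z.2))
      ((ENNReal.ofReal (r ^ n) • (volume : Measure Euc)).prod (volume : Measure ℝ))
      ((ENNReal.ofReal (r ^ n) • volume).prod (ENNReal.ofReal (r * r) • volume)) := by
    refine MeasurePreserving.prod (MeasurePreserving.id _) ⟨by fun_prop, ?_⟩
    rw [Real.map_volume_mul_left (show (r⁻¹ * r⁻¹ : ℝ) ≠ 0 by positivity)]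
    congr 1
    rw [mul_inv, inv_inv, abs_of_pos (by positivity : (0:ℝ) < r * r)]
  have hcomp := mpS2.comp (mpS1.comp (mpSH.comp (mpTR.comp mpR)))
  have hfun : ((fun z : Euc × ℝ => (z.1, r⁻¹ * r⁻¹ * z.2)) ∘
      ((fun z : Euc × ℝ => (r⁻¹ • z.1, z.2)) ∘
        ((fun z : Euc × ℝ => (z.1 - z.2 • (r⁻¹ • v), z.2)) ∘
          ((fun z : Euc × ℝ => z - (A w, (0 : ℝ))) ∘ Prod.map (⇑A) (id : ℝ → ℝ)))))
      = psi r A v w := by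
    funext z
    simp only [Function.comp_apply, Prod.map_apply, id_eq, Prod.fst_sub, Prod.snd_sub, psi]
    refine Prod.ext ?_ ?_
    · show r⁻¹ • (A z.1 - A w - (z.2 - 0) • (r⁻¹ • v))
          = r⁻¹ • A z.1 - (r⁻¹ * r⁻¹ * z.2) • v - r⁻¹ • A w
      match_scalars <;> ring
    · show r⁻¹ * r⁻¹ * (z.2 - 0) = r⁻¹ * r⁻¹ * z.2
      ring
  rw [hfun] at hcomp
  have hmeas : ((ENNReal.ofReal (r ^ n) • (volume : Measure Euc)).prod
      (ENNReal.ofReal (r * r) • (volume : Measure ℝ)))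
      = ENNReal.ofReal (r ^ n * (r * r)) • ((volume : Measure Euc).prod volume) := by
    rw [smul_prod_meas, prod_smul_meas _ ENNReal.ofReal_ne_top, smul_smul,
      ← ENNReal.ofReal_mul (by positivity)]
  rw [hmeas] at hcomp
  rw [Measure.volume_eq_prod]
  exact hcomp

lemma integral_comp_psi (r : ℝ) (hr : 0 < r) (A : Euc ≃ₗᵢ[ℝ] Euc) (v w : Euc)
    (K : Euc × ℝ → ℂ) :
    ∫ z, K (psi r A v w z) = (r ^ n * (r * r)) • ∫ z, K z := by
  rw [(measurePreserving_psi r hr A v w).integral_comp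
      (psiME r hr.ne' A v w).measurableEmbedding K]
  rw [integral_smul_measure, ENNReal.toReal_ofReal (by positivity)]

lemma integrable_comp_psi (r : ℝ) (hr : 0 < r) (A : Euc ≃ₗᵢ[ℝ] Euc) (v w : Euc)
    {K : Euc × ℝ → ℝ} (hK : Integrable K volume) :
    Integrable (fun z => K (psi r A v w z)) volume := by
  have h1 : Integrable K (ENNReal.ofReal (r ^ n * (r * r)) • volume) :=
    hK.smul_measure ENNReal.ofReal_ne_top
  exact ((measurePreserving_psi r hr A v w).integrable_comp_emb
    (psiME r hr.ne' A v w).measurableEmbedding).2 h1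

end

end ELSymAux

open ELSymAux

/-- the symmetries of the Euler-Lagrange equation for the
adjoint Fourier restriction functional on the paraboloid: if `f` satisfies the
equation, then so does `g(y) = ρ f(rAy + v) e^{iy·w}`. -/
theorem euler_lagrange_symmetry (d : ℕ) (hd : 2 ≤ d) (p q : ℝ)
    (hp1 : 1 < p) (hp2 : p < 2 * (d : ℝ) / ((d : ℝ) - 1))
    (hq : 1 / q = (((d : ℝ) - 1) / ((d : ℝ) + 1)) * (1 - 1 / p))
    (f : EuclideanSpace ℝ (Fin (d - 1)) → ℂ)
    (hf : MemLp f (ENNReal.ofReal p))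
    (hfint : Integrable (fun z : EuclideanSpace ℝ (Fin (d - 1)) × ℝ =>
      ‖parExt (d - 1) f z‖ ^ (q - 1)))
    (lam : ℂ)
    (hEL : ∀ᵐ y : EuclideanSpace ℝ (Fin (d - 1)),
      ∫ z : EuclideanSpace ℝ (Fin (d - 1)) × ℝ,
          Complex.exp (Complex.I * ((⟪z.1, y⟫ + z.2 * (‖y‖ ^ 2 / 2) : ℝ) : ℂ))
            * ((‖parExt (d - 1) f z‖ ^ (q - 2) : ℝ) : ℂ) * parExt (d - 1) f z
        = lam * ((‖f y‖ ^ (p - 2) : ℝ) : ℂ) * f y)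
    (ρ : ℂ) (hρ : ρ ≠ 0) (r : ℝ) (hr : 0 < r)
    (A : EuclideanSpace ℝ (Fin (d - 1)) ≃ₗᵢ[ℝ] EuclideanSpace ℝ (Fin (d - 1)))
    (v w : EuclideanSpace ℝ (Fin (d - 1))) :
    ∀ g : EuclideanSpace ℝ (Fin (d - 1)) → ℂ,
      (∀ y, g y = ρ * f (r • A y + v) * Complex.exp (Complex.I * ((⟪y, w⟫ : ℝ) : ℂ))) →
      MemLp g (ENNReal.ofReal p) ∧
      Integrable (fun z : EuclideanSpace ℝ (Fin (d - 1)) × ℝ =>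
        ‖parExt (d - 1) g z‖ ^ (q - 1)) ∧
      ∃ lam' : ℂ, ∀ᵐ y : EuclideanSpace ℝ (Fin (d - 1)),
        ∫ z : EuclideanSpace ℝ (Fin (d - 1)) × ℝ,
            Complex.exp (Complex.I * ((⟪z.1, y⟫ + z.2 * (‖y‖ ^ 2 / 2) : ℝ) : ℂ))
              * ((‖parExt (d - 1) g z‖ ^ (q - 2) : ℝ) : ℂ) * parExt (d - 1) g z
          = lam' * ((‖g y‖ ^ (p - 2) : ℝ) : ℂ) * g y := by
  intro g hg
  have hrne : r ≠ 0 := hr.ne'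
  -- Part 1 : `g ∈ L^p`
  have memfh : MemLp (fun y => f (hAff r A v y)) (ENNReal.ofReal p) volume :=
    memLp_comp_hAff r hr A v ENNReal.ofReal_ne_top hf
  have hcexp : Continuous fun y : EuclideanSpace ℝ (Fin (d - 1)) =>
      Complex.exp (Complex.I * ((⟪y, w⟫ : ℝ) : ℂ)) := by
    apply Complex.continuous_exp.comp
    exact continuous_const.mul (Complex.continuous_ofReal.comp
      (Continuous.inner continuous_id continuous_const))
  have hgAESM : AEStronglyMeasurable g volume := by
    have h1 : AEStronglyMeasurable (fun y => ρ * f (hAff r A v y)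
        * Complex.exp (Complex.I * ((⟪y, w⟫ : ℝ) : ℂ))) volume :=
      (memfh.1.const_mul ρ).mul hcexp.aestronglyMeasurable
    exact h1.congr (Filter.Eventually.of_forall fun y => (hg y).symm)
  have hmem : MemLp g (ENNReal.ofReal p) volume := by
    refine MemLp.of_le (memfh.const_mul ρ) hgAESM (Filter.Eventually.of_forall fun y => ?_)
    rw [hg y, norm_mul]
    have h1 : ‖Complex.exp (Complex.I * ((⟪y, w⟫ : ℝ) : ℂ))‖ = 1 := by
      rw [Complex.norm_exp]
      simp
    rw [h1, mul_one]
    exact le_rfl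
  -- pointwise formula for `Eg`
  have hEg : ∀ z : EuclideanSpace ℝ (Fin (d - 1)) × ℝ,
      parExt (d - 1) g z = ((r ^ (d - 1) : ℝ)⁻¹) •
        (Complex.exp (Complex.I * ((theta r A v w z : ℝ) : ℂ)) * ρ
          * parExt (d - 1) f (psi r A v w z)) := by
    intro z
    have hint : ∀ y, Complex.exp (-(Complex.I * ((⟪z.1, y⟫ : ℝ) : ℂ))
          - Complex.I * (z.2 : ℂ) * ((‖y‖ ^ 2 : ℝ) : ℂ) / 2) * g y
        = (fun u' => Complex.exp (Complex.I * ((theta r A v w z : ℝ) : ℂ)) * ρ *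
            (Complex.exp (-(Complex.I * ((⟪(psi r A v w z).1, u'⟫ : ℝ) : ℂ))
              - Complex.I * (((psi r A v w z).2 : ℝ) : ℂ) * ((‖u'‖ ^ 2 : ℝ) : ℂ) / 2) * f u'))
          (hAff r A v y) := by
      intro y
      have hph := phase_eq r hrne A v w z y
      have hphC : ((⟪z.1, y⟫ : ℝ) : ℂ) + (z.2 : ℂ) * ((‖y‖ ^ 2 : ℝ) : ℂ) / 2
            + ((theta r A v w z : ℝ) : ℂ)
          = ((⟪y, w⟫ : ℝ) : ℂ) + ((⟪(psi r A v w z).1, hAff r A v y⟫ : ℝ) : ℂ)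
            + (((psi r A v w z).2 : ℝ) : ℂ) * ((‖hAff r A v y‖ ^ 2 : ℝ) : ℂ) / 2 := by
        have h2 := congrArg (fun x : ℝ => (x : ℂ)) hph
        push_cast at h2 ⊢
        linear_combination h2
      have hexp : Complex.exp (-(Complex.I * ((⟪z.1, y⟫ : ℝ) : ℂ))
            - Complex.I * (z.2 : ℂ) * ((‖y‖ ^ 2 : ℝ) : ℂ) / 2)
            * Complex.exp (Complex.I * ((⟪y, w⟫ : ℝ) : ℂ))
          = Complex.exp (Complex.I * ((theta r A v w z : ℝ) : ℂ))
            * Complex.exp (-(Complex.I * ((⟪(psi r A v w z).1, hAff r A v y⟫ : ℝ) : ℂ))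
              - Complex.I * (((psi r A v w z).2 : ℝ) : ℂ)
                * ((‖hAff r A v y‖ ^ 2 : ℝ) : ℂ) / 2) := by
        rw [← Complex.exp_add, ← Complex.exp_add]
        congr 1
        linear_combination (-Complex.I) * hphC
      show _ = Complex.exp (Complex.I * ((theta r A v w z : ℝ) : ℂ)) * ρ *
            (Complex.exp (-(Complex.I * ((⟪(psi r A v w z).1, hAff r A v y⟫ : ℝ) : ℂ))
              - Complex.I * (((psi r A v w z).2 : ℝ) : ℂ)
                * ((‖hAff r A v y‖ ^ 2 : ℝ) : ℂ) / 2) * f (hAff r A v y))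
      rw [hg y]
      have : f (r • A y + v) = f (hAff r A v y) := rfl
      rw [this]
      linear_combination (ρ * f (hAff r A v y)) * hexp
    calc parExt (d - 1) g z
        = ∫ y, Complex.exp (Complex.I * ((theta r A v w z : ℝ) : ℂ)) * ρ *
            (Complex.exp (-(Complex.I * ((⟪(psi r A v w z).1, hAff r A v y⟫ : ℝ) : ℂ))
              - Complex.I * (((psi r A v w z).2 : ℝ) : ℂ)
                * ((‖hAff r A v y‖ ^ 2 : ℝ) : ℂ) / 2) * f (hAff r A v y)) := by
          exact integral_congr_ae (Filter.Eventually.of_forall hint)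
      _ = ((r ^ (d - 1) : ℝ)⁻¹) • ∫ u', Complex.exp (Complex.I * ((theta r A v w z : ℝ) : ℂ)) * ρ *
            (Complex.exp (-(Complex.I * ((⟪(psi r A v w z).1, u'⟫ : ℝ) : ℂ))
              - Complex.I * (((psi r A v w z).2 : ℝ) : ℂ)
                * ((‖u'‖ ^ 2 : ℝ) : ℂ) / 2) * f u') := by
          exact integral_comp_hAff r hr A v
            (fun u' => Complex.exp (Complex.I * ((theta r A v w z : ℝ) : ℂ)) * ρ *
              (Complex.exp (-(Complex.I * ((⟪(psi r A v w z).1, u'⟫ : ℝ) : ℂ))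
                - Complex.I * (((psi r A v w z).2 : ℝ) : ℂ)
                  * ((‖u'‖ ^ 2 : ℝ) : ℂ) / 2) * f u'))
      _ = ((r ^ (d - 1) : ℝ)⁻¹) • (Complex.exp (Complex.I * ((theta r A v w z : ℝ) : ℂ)) * ρ *
            ∫ u', Complex.exp (-(Complex.I * ((⟪(psi r A v w z).1, u'⟫ : ℝ) : ℂ))
              - Complex.I * (((psi r A v w z).2 : ℝ) : ℂ)
                * ((‖u'‖ ^ 2 : ℝ) : ℂ) / 2) * f u') := by
          rw [integral_const_mul]
      _ = ((r ^ (d - 1) : ℝ)⁻¹) • (Complex.exp (Complex.I * ((theta r A v w z : ℝ) : ℂ)) * ρ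
            * parExt (d - 1) f (psi r A v w z)) := rfl
  -- modulus of `Eg`
  have habs : ∀ z, ‖parExt (d - 1) g z‖
      = ((r ^ (d - 1) : ℝ)⁻¹ * ‖ρ‖)
        * ‖parExt (d - 1) f (psi r A v w z)‖ := by
    intro z
    rw [hEg z, Complex.real_smul, norm_mul, norm_mul, norm_mul, Complex.norm_real,
      Real.norm_eq_abs, Complex.norm_exp]
    have h1 : (Complex.I * ((theta r A v w z : ℝ) : ℂ)).re = 0 := by simp
    rw [h1, Real.exp_zero, abs_of_pos (by positivity : (0:ℝ) < (r ^ (d - 1) : ℝ)⁻¹)]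
    ring
  have hκ0 : (0:ℝ) ≤ (r ^ (d - 1) : ℝ)⁻¹ * ‖ρ‖ :=
    mul_nonneg (by positivity) (norm_nonneg ρ)
  -- Part 2 : integrability
  have hintg2 : Integrable (fun z : EuclideanSpace ℝ (Fin (d - 1)) × ℝ =>
      ‖parExt (d - 1) g z‖ ^ (q - 1)) := by
    have he : (fun z : EuclideanSpace ℝ (Fin (d - 1)) × ℝ =>
        ‖parExt (d - 1) g z‖ ^ (q - 1))
        = fun z => (((r ^ (d - 1) : ℝ)⁻¹ * ‖ρ‖) ^ (q - 1)) *
            ((fun Z => ‖parExt (d - 1) f Z‖ ^ (q - 1)) (psi r A v w z)) := by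
      funext z
      rw [habs z, Real.mul_rpow hκ0 (norm_nonneg _)]
    rw [he]
    exact (integrable_comp_psi r hr A v w hfint).const_mul _
  -- Part 3 : the Euler–Lagrange equation
  have qmp := quasiMeasurePreserving_hAff (n := d - 1) r hr A v
  have hELu := qmp.ae hEL
  refine ⟨hmem, hintg2, ⟨(((((r ^ (d - 1) : ℝ)⁻¹ * ‖ρ‖) ^ (q - 2) : ℝ) : ℂ)
      * (((r ^ (d - 1) : ℝ)⁻¹ : ℝ) : ℂ) * ((r ^ (d - 1) * (r * r) : ℝ) : ℂ) * lam)
      / ((‖ρ‖ ^ (p - 2) : ℝ) : ℂ), ?_⟩⟩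
  filter_upwards [hELu] with y hy
  have hintg : ∀ z : EuclideanSpace ℝ (Fin (d - 1)) × ℝ,
      Complex.exp (Complex.I * ((⟪z.1, y⟫ + z.2 * (‖y‖ ^ 2 / 2) : ℝ) : ℂ))
        * ((‖parExt (d - 1) g z‖ ^ (q - 2) : ℝ) : ℂ) * parExt (d - 1) g z
      = (((((r ^ (d - 1) : ℝ)⁻¹ * ‖ρ‖) ^ (q - 2) : ℝ) : ℂ)
          * (((r ^ (d - 1) : ℝ)⁻¹ : ℝ) : ℂ) * ρ
          * Complex.exp (Complex.I * ((⟪y, w⟫ : ℝ) : ℂ)))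
        * (Complex.exp (Complex.I * ((⟪(psi r A v w z).1, hAff r A v y⟫
                + (psi r A v w z).2 * (‖hAff r A v y‖ ^ 2 / 2) : ℝ) : ℂ))
              * ((‖parExt (d - 1) f (psi r A v w z)‖ ^ (q - 2) : ℝ) : ℂ)
              * parExt (d - 1) f (psi r A v w z)) := by
    intro z
    have hph := phase_eq r hrne A v w z y
    have hexp : Complex.exp (Complex.I * ((⟪z.1, y⟫ + z.2 * (‖y‖ ^ 2 / 2) : ℝ) : ℂ))
          * Complex.exp (Complex.I * ((theta r A v w z : ℝ) : ℂ))
        = Complex.exp (Complex.I * ((⟪y, w⟫ : ℝ) : ℂ))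
          * Complex.exp (Complex.I * ((⟪(psi r A v w z).1, hAff r A v y⟫
              + (psi r A v w z).2 * (‖hAff r A v y‖ ^ 2 / 2) : ℝ) : ℂ)) := by
      rw [← Complex.exp_add, ← Complex.exp_add]
      congr 1
      have h2 := congrArg (fun x : ℝ => (x : ℂ)) hph
      push_cast at h2 ⊢
      linear_combination Complex.I * h2
    rw [habs z, Real.mul_rpow hκ0 (norm_nonneg _), hEg z, Complex.real_smul]
    push_cast at hexp ⊢
    linear_combination (((((r ^ (d - 1) : ℝ)⁻¹ * ‖ρ‖) ^ (q - 2) : ℝ) : ℂ)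
      * ((‖parExt (d - 1) f (psi r A v w z)‖ ^ (q - 2) : ℝ) : ℂ)
      * ((r : ℂ))⁻¹ ^ (d - 1) * ρ * parExt (d - 1) f (psi r A v w z)) * hexp
  have hstep : (∫ z : EuclideanSpace ℝ (Fin (d - 1)) × ℝ,
      Complex.exp (Complex.I * ((⟪z.1, y⟫ + z.2 * (‖y‖ ^ 2 / 2) : ℝ) : ℂ))
        * ((‖parExt (d - 1) g z‖ ^ (q - 2) : ℝ) : ℂ) * parExt (d - 1) g z)
      = (((((r ^ (d - 1) : ℝ)⁻¹ * ‖ρ‖) ^ (q - 2) : ℝ) : ℂ)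
          * (((r ^ (d - 1) : ℝ)⁻¹ : ℝ) : ℂ) * ρ
          * Complex.exp (Complex.I * ((⟪y, w⟫ : ℝ) : ℂ)))
        * ((r ^ (d - 1) * (r * r) : ℝ)
          • (lam * ((‖f (hAff r A v y)‖ ^ (p - 2) : ℝ) : ℂ) * f (hAff r A v y))) := by
    calc (∫ z : EuclideanSpace ℝ (Fin (d - 1)) × ℝ,
        Complex.exp (Complex.I * ((⟪z.1, y⟫ + z.2 * (‖y‖ ^ 2 / 2) : ℝ) : ℂ))
          * ((‖parExt (d - 1) g z‖ ^ (q - 2) : ℝ) : ℂ) * parExt (d - 1) g z)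
        = ∫ z, (((((r ^ (d - 1) : ℝ)⁻¹ * ‖ρ‖) ^ (q - 2) : ℝ) : ℂ)
            * (((r ^ (d - 1) : ℝ)⁻¹ : ℝ) : ℂ) * ρ
            * Complex.exp (Complex.I * ((⟪y, w⟫ : ℝ) : ℂ)))
          * (Complex.exp (Complex.I * ((⟪(psi r A v w z).1, hAff r A v y⟫
                + (psi r A v w z).2 * (‖hAff r A v y‖ ^ 2 / 2) : ℝ) : ℂ))
              * ((‖parExt (d - 1) f (psi r A v w z)‖ ^ (q - 2) : ℝ) : ℂ)
              * parExt (d - 1) f (psi r A v w z)) := by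
          exact integral_congr_ae (Filter.Eventually.of_forall hintg)
      _ = (((((r ^ (d - 1) : ℝ)⁻¹ * ‖ρ‖) ^ (q - 2) : ℝ) : ℂ)
            * (((r ^ (d - 1) : ℝ)⁻¹ : ℝ) : ℂ) * ρ
            * Complex.exp (Complex.I * ((⟪y, w⟫ : ℝ) : ℂ)))
          * ∫ z, Complex.exp (Complex.I * ((⟪(psi r A v w z).1, hAff r A v y⟫
                + (psi r A v w z).2 * (‖hAff r A v y‖ ^ 2 / 2) : ℝ) : ℂ))
              * ((‖parExt (d - 1) f (psi r A v w z)‖ ^ (q - 2) : ℝ) : ℂ)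
              * parExt (d - 1) f (psi r A v w z) := by
          exact integral_const_mul _ _
      _ = (((((r ^ (d - 1) : ℝ)⁻¹ * ‖ρ‖) ^ (q - 2) : ℝ) : ℂ)
            * (((r ^ (d - 1) : ℝ)⁻¹ : ℝ) : ℂ) * ρ
            * Complex.exp (Complex.I * ((⟪y, w⟫ : ℝ) : ℂ)))
          * ((r ^ (d - 1) * (r * r) : ℝ)
            • ∫ Z : EuclideanSpace ℝ (Fin (d - 1)) × ℝ,
              Complex.exp (Complex.I * ((⟪Z.1, hAff r A v y⟫
                  + Z.2 * (‖hAff r A v y‖ ^ 2 / 2) : ℝ) : ℂ))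
                * ((‖parExt (d - 1) f Z‖ ^ (q - 2) : ℝ) : ℂ)
                * parExt (d - 1) f Z) := by
          congr 1
          exact integral_comp_psi r hr A v w
            (fun Z => Complex.exp (Complex.I * ((⟪Z.1, hAff r A v y⟫
                + Z.2 * (‖hAff r A v y‖ ^ 2 / 2) : ℝ) : ℂ))
              * ((‖parExt (d - 1) f Z‖ ^ (q - 2) : ℝ) : ℂ)
              * parExt (d - 1) f Z)
      _ = (((((r ^ (d - 1) : ℝ)⁻¹ * ‖ρ‖) ^ (q - 2) : ℝ) : ℂ)
            * (((r ^ (d - 1) : ℝ)⁻¹ : ℝ) : ℂ) * ρ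
            * Complex.exp (Complex.I * ((⟪y, w⟫ : ℝ) : ℂ)))
          * ((r ^ (d - 1) * (r * r) : ℝ)
            • (lam * ((‖f (hAff r A v y)‖ ^ (p - 2) : ℝ) : ℂ)
              * f (hAff r A v y))) := by
          rw [hy]
  rw [hstep, hg y]
  have habsg : ‖ρ * f (r • A y + v)
      * Complex.exp (Complex.I * ((⟪y, w⟫ : ℝ) : ℂ))‖
      = ‖ρ‖ * ‖f (r • A y + v)‖ := by
    rw [norm_mul, norm_mul, Complex.norm_exp]
    have h1 : (Complex.I * ((⟪y, w⟫ : ℝ) : ℂ)).re = 0 := by simp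
    rw [h1, Real.exp_zero, mul_one]
  rw [habsg, Real.mul_rpow (norm_nonneg _) (norm_nonneg _)]
  have hfu : f (r • A y + v) = f (hAff r A v y) := rfl
  rw [hfu]
  have hne : ((‖ρ‖ ^ (p - 2) : ℝ) : ℂ) ≠ 0 := by
    rw [Complex.ofReal_ne_zero]
    exact (Real.rpow_pos_of_pos (norm_pos_iff.mpr hρ) _).ne'
  rw [Complex.real_smul, div_mul_eq_mul_div, div_mul_eq_mul_div, eq_div_iff hne]
  push_cast
  ring
end

section
/- Let d ≥ 2 be an integer, let q > 1 be real, and let a ≥ 0. Then ∫_ℝ (1+it)^{-1} (1-it)^{(d-3)/2} (q-1-it)^{-(d-1)/2} exp(a(it - (1+t²)/(q-1-it))) dt = 2π · 2^{(d-3)/2} · q^{-(d-1)/2} · e^{-a}, where all complex powers are principal branch (each base has positive real part for t ∈ ℝ). -/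
open MeasureTheory Complex Set Filter Topology

noncomputable section

namespace ContourP2

/-- Compatibility: the complex modulus as an absolute value. -/
def Complex.abs : AbsoluteValue ℂ ℝ where
  toFun := fun z => ‖z‖
  map_mul' := norm_mul
  nonneg' := norm_nonneg
  eq_zero' := fun _ => norm_eq_zero
  add_le' := norm_add_le

lemma Complex.norm_eq_abs (z : ℂ) : ‖z‖ = Complex.abs z := rfl

@[simp] lemma Complex.abs_I : Complex.abs I = 1 := Complex.norm_I

@[simp] lemma Complex.abs_ofReal (x : ℝ) : Complex.abs (x : ℂ) = |x| := Complex.norm_real x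

@[simp] lemma Complex.abs_two : Complex.abs 2 = 2 := Complex.norm_two

lemma Complex.abs_cpow_real (x : ℂ) (y : ℝ) : Complex.abs (x ^ (y : ℂ)) = Complex.abs x ^ y :=
  Complex.norm_cpow_real x y

lemma Complex.abs_exp (z : ℂ) : Complex.abs (Complex.exp z) = Real.exp z.re := Complex.norm_exp z

lemma Complex.re_le_abs (z : ℂ) : z.re ≤ Complex.abs z := Complex.re_le_norm z

lemma Complex.abs_re_le_abs (z : ℂ) : |z.re| ≤ Complex.abs z := Complex.abs_re_le_norm z

lemma Complex.abs_im_le_abs (z : ℂ) : |z.im| ≤ Complex.abs z := Complex.abs_im_le_norm z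

lemma Complex.sq_abs (z : ℂ) : Complex.abs z ^ 2 = Complex.normSq z := Complex.sq_norm z

/-- The holomorphic (on the upper half-plane) part of the integrand. -/
def Gc (d : ℕ) (q a : ℝ) (z : ℂ) : ℂ :=
  (1 - I * z) ^ (((d : ℂ) - 3) / 2) * ((q : ℂ) - 1 - I * z) ^ (-((d : ℂ) - 1) / 2)
    * Complex.exp ((a : ℂ) * (I * z - (1 + z ^ 2) / ((q : ℂ) - 1 - I * z)))

/-- The integrand, as a function of a complex variable. -/
def fc (d : ℕ) (q a : ℝ) (z : ℂ) : ℂ := (1 + I * z)⁻¹ * Gc d q a z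

/-- The integrand with the pole at `I` subtracted off. -/
def hc (d : ℕ) (q a : ℝ) (z : ℂ) : ℂ :=
  I⁻¹ * dslope (Gc d q a) I z + Gc d q a I / I * (z + I)⁻¹

/-- Constant in the decay estimate for `Gc`. -/
def CG (d : ℕ) (q : ℝ) : ℝ :=
  max (((q - 1 + |q - 2|) / (q - 1)) ^ (((d : ℝ) - 3) / 2))
    ((1 + |q - 2|)⁻¹ ^ (((d : ℝ) - 3) / 2))

/-- Constant in the decay estimate for `hc` far away. -/
def CH (d : ℕ) (q a : ℝ) : ℝ := 4 * CG d q + 8 * Complex.abs (Gc d q a I)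

/-- Constant in the bound for `hc` on the real line. -/
def CR (d : ℕ) (q a : ℝ) : ℝ := CG d q * (min 1 (q - 1))⁻¹ + 2 * Complex.abs (Gc d q a I)

/-- The open half-plane on which everything is holomorphic. -/
def S (q : ℝ) : Set ℂ := {z : ℂ | -(min 1 (q - 1)) < z.im}

variable {d : ℕ} {q a : ℝ}

lemma re_base1 (z : ℂ) : (1 - I * z).re = 1 + z.im := by simp

lemma re_base2 (z : ℂ) : ((q : ℂ) - 1 - I * z).re = q - 1 + z.im := by simp

lemma abs_sub_abs_le (z w : ℂ) : Complex.abs z - Complex.abs w ≤ Complex.abs (z - w) := by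
  have := norm_sub_norm_le z w
  simpa [Complex.norm_eq_abs] using this

lemma coe_ne_I (x : ℝ) : (x : ℂ) ≠ I := fun h => by
  have := congrArg Complex.im h; simp at this

lemma coe_ne_neg_I (x : ℝ) : (x : ℂ) ≠ -I := fun h => by
  have := congrArg Complex.im h; simp at this

lemma hSopen : IsOpen (S q) := isOpen_lt continuous_const Complex.continuous_im

lemma hIS (hq : 1 < q) : I ∈ S q := by
  simp only [S, mem_setOf_eq, Complex.I_im]
  have : 0 < min 1 (q - 1) := lt_min one_pos (by linarith)
  linarith

lemma hGdiff (hq : 1 < q) {z : ℂ} (hz : -(min 1 (q - 1)) < z.im) :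
    DifferentiableAt ℂ (Gc d q a) z := by
  have h1 : 0 < (1 - I * z).re := by
    rw [re_base1]
    have := min_le_left 1 (q - 1); linarith
  have h2 : 0 < ((q : ℂ) - 1 - I * z).re := by
    rw [re_base2]
    have := min_le_right 1 (q - 1); linarith
  have hb1 : DifferentiableAt ℂ (fun z : ℂ => 1 - I * z) z := by fun_prop
  have hb2 : DifferentiableAt ℂ (fun z : ℂ => (q : ℂ) - 1 - I * z) z := by fun_prop
  have h2ne : ((q : ℂ) - 1 - I * z) ≠ 0 := fun h => by simp [h] at h2
  refine DifferentiableAt.mul (DifferentiableAt.mul ?_ ?_) ?_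
  · exact hb1.cpow (differentiableAt_const _) (Or.inl h1)
  · exact hb2.cpow (differentiableAt_const _) (Or.inl h2)
  · refine Complex.differentiableAt_exp.comp _ (DifferentiableAt.const_mul ?_ _)
    exact ((differentiableAt_id.const_mul I).sub ((differentiableAt_const _).add
      (differentiableAt_id.pow 2) |>.div hb2 h2ne))

lemma re_exponent_nonpos (hq : 1 < q) (ha : 0 ≤ a) {z : ℂ} (hz : 0 ≤ z.im) :
    ((a : ℂ) * (I * z - (1 + z ^ 2) / ((q : ℂ) - 1 - I * z))).re ≤ 0 := by
  set x := z.re with hx; set y := z.im with hy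
  have h3 : ((q : ℂ) - 1 - I * z).re = q - 1 + y := by simp [hy]
  have h4 : ((q : ℂ) - 1 - I * z).im = -x := by simp [hx]
  have hNval : Complex.normSq ((q : ℂ) - 1 - I * z) = (q - 1 + y) ^ 2 + x ^ 2 := by
    rw [Complex.normSq_apply, h3, h4]; ring
  have hN : 0 < Complex.normSq ((q : ℂ) - 1 - I * z) := by nlinarith
  have hre : ((1 + z ^ 2) / ((q : ℂ) - 1 - I * z)).re
      = ((1 + x ^ 2 - y ^ 2) * (q - 1 + y) - 2 * x ^ 2 * y)
        / Complex.normSq ((q : ℂ) - 1 - I * z) := by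
    rw [Complex.div_re]
    have h1 : (1 + z ^ 2).re = 1 + x ^ 2 - y ^ 2 := by
      simp [pow_two, Complex.mul_re, ← hx, ← hy]; ring
    have h2 : (1 + z ^ 2).im = 2 * x * y := by
      simp [pow_two, Complex.mul_im, ← hx, ← hy]; ring
    rw [h1, h2, h3, h4]; ring
  have hIz : (I * z).re = -y := by simp [hy]
  have hE : (I * z - (1 + z ^ 2) / ((q : ℂ) - 1 - I * z)).re ≤ 0 := by
    rw [Complex.sub_re, hIz, hre, sub_nonpos, le_div_iff₀ hN, hNval]
    nlinarith [sq_nonneg x, mul_nonneg hz (by linarith : (0:ℝ) ≤ q - 1),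
      mul_nonneg (mul_nonneg hz hz) (by linarith : (0:ℝ) ≤ q - 1)]
  calc ((a : ℂ) * (I * z - (1 + z ^ 2) / ((q : ℂ) - 1 - I * z))).re
      = a * (I * z - (1 + z ^ 2) / ((q : ℂ) - 1 - I * z)).re := by
        rw [Complex.re_ofReal_mul]
    _ ≤ 0 := mul_nonpos_of_nonneg_of_nonpos ha hE

lemma abs_Gc_le (hq : 1 < q) (ha : 0 ≤ a) {z : ℂ} (hz : 0 ≤ z.im) :
    Complex.abs (Gc d q a z) ≤ CG d q * (Complex.abs ((q : ℂ) - 1 - I * z))⁻¹ := by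
  set e : ℝ := ((d : ℝ) - 3) / 2 with he
  set A := Complex.abs (1 - I * z) with hA
  set W := Complex.abs ((q : ℂ) - 1 - I * z) with hW
  have hA1 : 1 ≤ A := by
    calc (1 : ℝ) ≤ 1 + z.im := by linarith
    _ = (1 - I * z).re := by simp
    _ ≤ A := Complex.re_le_abs _
  have hWq : q - 1 ≤ W := by
    calc q - 1 ≤ q - 1 + z.im := by linarith
    _ = ((q : ℂ) - 1 - I * z).re := by simp
    _ ≤ W := Complex.re_le_abs _
  have hW0 : 0 < W := by linarith
  have hA0 : 0 < A := by linarith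
  have hAW : A ≤ W + |q - 2| := by
    have : (1 : ℂ) - I * z = ((q : ℂ) - 1 - I * z) - ((q : ℝ) - 2 : ℝ) := by
      push_cast; ring
    rw [hA, this]
    calc Complex.abs _ ≤ W + Complex.abs (((q : ℝ) - 2 : ℝ) : ℂ) :=
        (Complex.abs.sub_le_add _ _)
      _ = W + |q - 2| := by rw [Complex.abs_ofReal]
  have hWA : W ≤ A * (1 + |q - 2|) := by
    have : ((q : ℂ)) - 1 - I * z = (1 - I * z) + ((q : ℝ) - 2 : ℝ) := by push_cast; ring
    have h2 : W ≤ A + |q - 2| := by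
      rw [hW, this]
      calc Complex.abs _ ≤ A + Complex.abs (((q : ℝ) - 2 : ℝ) : ℂ) := Complex.abs.add_le _ _
        _ = A + |q - 2| := by rw [Complex.abs_ofReal]
    nlinarith [abs_nonneg (q - 2)]
  -- ratio bound
  have hm : (0 : ℝ) < (1 + |q - 2|)⁻¹ := by positivity
  have hratio_lo : (1 + |q - 2|)⁻¹ ≤ A / W := by
    rw [le_div_iff₀ hW0, inv_mul_le_iff₀ (by positivity)]
    linarith [hWA]
  have hratio_hi : A / W ≤ (q - 1 + |q - 2|) / (q - 1) := by
    rw [div_le_div_iff₀ hW0 (by linarith)]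
    nlinarith [abs_nonneg (q - 2)]
  have hratio : (A / W) ^ e ≤ CG d q := by
    rcases le_or_gt 0 e with h | h
    · exact le_max_of_le_left (Real.rpow_le_rpow (by positivity) hratio_hi h)
    · exact le_max_of_le_right (Real.rpow_le_rpow_of_nonpos hm hratio_lo h.le)
  -- compute the modulus
  have he1 : (((d : ℂ) - 3) / 2) = ((e : ℝ) : ℂ) := by rw [he]; push_cast; ring
  have he2 : (-((d : ℂ) - 1) / 2) = (((-((d : ℝ) - 1) / 2 : ℝ)) : ℂ) := by push_cast; ring
  have habs : Complex.abs (Gc d q a z)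
      ≤ A ^ e * W ^ (-((d : ℝ) - 1) / 2) := by
    rw [Gc, map_mul, map_mul, he1, he2, Complex.abs_cpow_real, Complex.abs_cpow_real,
      Complex.abs_exp]
    have : Real.exp ((((a : ℂ)) * (I * z - (1 + z ^ 2) / ((q : ℂ) - 1 - I * z))).re) ≤ 1 :=
      Real.exp_le_one_iff.2 (re_exponent_nonpos hq ha hz)
    calc A ^ e * W ^ (-((d : ℝ) - 1) / 2) * Real.exp _
        ≤ A ^ e * W ^ (-((d : ℝ) - 1) / 2) * 1 := by
          apply mul_le_mul_of_nonneg_left this (by positivity)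
      _ = A ^ e * W ^ (-((d : ℝ) - 1) / 2) := by ring
  refine habs.trans ?_
  have hsplit : A ^ e = (A / W) ^ e * W ^ e := by
    rw [Real.div_rpow hA0.le hW0.le, div_mul_cancel₀]
    exact (Real.rpow_pos_of_pos hW0 e).ne'
  rw [hsplit, mul_assoc, ← Real.rpow_add hW0]
  have hexp : e + -((d : ℝ) - 1) / 2 = -1 := by rw [he]; ring
  rw [hexp, Real.rpow_neg_one]
  exact mul_le_mul_of_nonneg_right hratio (by positivity)

lemma fc_eq (z : ℂ) (h1 : z ≠ I) (h2 : z ≠ -I) :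
    fc d q a z = hc d q a z + 2 * Gc d q a I * (1 + z ^ 2)⁻¹ := by
  have hzI : z - I ≠ 0 := sub_ne_zero.2 h1
  have hzI' : z + I ≠ 0 := fun h => h2 (by linear_combination h)
  have hfac : 1 + z ^ 2 = (z - I) * (z + I) := by
    linear_combination Complex.I_mul_I
  have hden : (1 : ℂ) + I * z = I * (z - I) := by
    linear_combination Complex.I_mul_I
  rw [fc, hc, dslope_of_ne _ h1, hden, hfac, slope_def_field]
  field_simp
  ring

lemma Gc_I : Gc d q a I
    = (2 : ℂ) ^ (((d : ℂ) - 3) / 2) * (q : ℂ) ^ (-((d : ℂ) - 1) / 2) * Complex.exp (-(a : ℂ)) := by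
  rw [Gc]
  have h1 : (1 : ℂ) - I * I = 2 := by rw [Complex.I_mul_I]; ring
  have h2 : (q : ℂ) - 1 - I * I = q := by rw [Complex.I_mul_I]; ring
  have h3 : (1 : ℂ) + I ^ 2 = 0 := by rw [Complex.I_sq]; ring
  rw [h1, h2, h3]
  norm_num [Complex.I_mul_I]

lemma hc_diffOn (hq : 1 < q) : DifferentiableOn ℂ (hc d q a) (S q) := by
  have hg : DifferentiableOn ℂ (Gc d q a) (S q) := fun z hz =>
    (hGdiff hq hz).differentiableWithinAt
  have h1 : DifferentiableOn ℂ (dslope (Gc d q a) I) (S q) :=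
    (Complex.differentiableOn_dslope (hSopen.mem_nhds (hIS hq))).2 hg
  refine (h1.const_mul _).add ((differentiableOn_const _).mul ?_)
  refine DifferentiableOn.inv (differentiableOn_id.add_const I) (fun z hz => ?_)
  intro h
  have him : z.im = -1 := by
    have hzz : z = -I := by linear_combination h
    simp [hzz]
  have hmin : min 1 (q - 1) ≤ 1 := min_le_left _ _
  have hzS : -(min 1 (q - 1)) < z.im := hz
  rw [him] at hzS; linarith

lemma CG_pos (hq : 1 < q) : 0 < CG d q := by
  have h1 : (0 : ℝ) < q - 1 := by linarith
  exact lt_max_of_lt_left (Real.rpow_pos_of_pos (div_pos (by positivity) h1) _)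

lemma hc_decay (hq : 1 < q) (ha : 0 ≤ a) {R : ℝ} (hR : max 2 (2 * q) ≤ R) {z : ℂ}
    (hz : 0 ≤ z.im) (hzR : R ≤ Complex.abs z) :
    Complex.abs (hc d q a z) ≤ CH d q a / R ^ 2 := by
  have hR2 : (2 : ℝ) ≤ R := le_trans (le_max_left _ _) hR
  have hRq : 2 * q ≤ R := le_trans (le_max_right _ _) hR
  have hR0 : (0 : ℝ) < R := by linarith
  have habsz : 2 ≤ Complex.abs z := le_trans hR2 hzR
  have h1 : z ≠ I := fun h => by rw [h] at habsz; simp at habsz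
  have h2 : z ≠ -I := fun h => by rw [h] at habsz; simp at habsz
  have hzmI : R / 2 ≤ Complex.abs (z - I) := by
    have := abs_sub_abs_le z I
    rw [Complex.abs_I] at this
    linarith
  have hzpI : R / 2 ≤ Complex.abs (z + I) := by
    have h := abs_sub_abs_le z (-I)
    simp only [Complex.abs.map_neg, Complex.abs_I, sub_neg_eq_add] at h
    linarith
  have hW : R / 2 ≤ Complex.abs ((q : ℂ) - 1 - I * z) := by
    have harr : (q : ℂ) - 1 - I * z = -(I * z - ((q : ℝ) - 1 : ℝ)) := by push_cast; ring
    have h := abs_sub_abs_le (I * z) (((q : ℝ) - 1 : ℝ) : ℂ)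
    rw [harr, Complex.abs.map_neg]
    have hIz : Complex.abs (I * z) = Complex.abs z := by
      rw [map_mul, Complex.abs_I, one_mul]
    have habsq : Complex.abs (((q : ℝ) - 1 : ℝ) : ℂ) = q - 1 := by
      rw [Complex.abs_ofReal, abs_of_pos (by linarith)]
    rw [hIz, habsq] at h
    linarith
  -- rewrite hc via fc
  have hrel := fc_eq (d := d) (q := q) (a := a) z h1 h2
  have hhc : hc d q a z = fc d q a z - 2 * Gc d q a I * (1 + z ^ 2)⁻¹ := by
    rw [hrel]; ring
  rw [hhc]
  have hfc : Complex.abs (fc d q a z) ≤ 4 * CG d q / R ^ 2 := by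
    rw [fc, map_mul, map_inv₀]
    have hden : (1 : ℂ) + I * z = I * (z - I) := by linear_combination Complex.I_mul_I
    have habs1 : Complex.abs (1 + I * z) = Complex.abs (z - I) := by
      rw [hden, map_mul, Complex.abs_I, one_mul]
    rw [habs1]
    have hG := abs_Gc_le (d := d) (a := a) hq ha hz
    have hCG := (CG_pos (d := d) hq).le
    have hW0 : (0 : ℝ) < Complex.abs ((q : ℂ) - 1 - I * z) := by linarith
    have hzmI0 : (0 : ℝ) < Complex.abs (z - I) := by linarith
    calc (Complex.abs (z - I))⁻¹ * Complex.abs (Gc d q a z)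
        ≤ (R / 2)⁻¹ * (CG d q * (R / 2)⁻¹) := by
          apply mul_le_mul (inv_anti₀ (by linarith) hzmI)
            (hG.trans ?_) (by positivity) (by positivity)
          exact mul_le_mul_of_nonneg_left (inv_anti₀ (by linarith) hW) hCG
      _ = 4 * CG d q / R ^ 2 := by field_simp; ring
  have hpole : Complex.abs (2 * Gc d q a I * (1 + z ^ 2)⁻¹)
      ≤ 8 * Complex.abs (Gc d q a I) / R ^ 2 := by
    have hfac : 1 + z ^ 2 = (z - I) * (z + I) := by linear_combination Complex.I_mul_I
    rw [map_mul, map_mul, map_inv₀, hfac, map_mul, Complex.abs_two]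
    have hden : (R / 2) * (R / 2) ≤ Complex.abs (z - I) * Complex.abs (z + I) :=
      mul_le_mul hzmI hzpI (by positivity) (by positivity)
    calc 2 * Complex.abs (Gc d q a I) * (Complex.abs (z - I) * Complex.abs (z + I))⁻¹
        ≤ 2 * Complex.abs (Gc d q a I) * ((R / 2) * (R / 2))⁻¹ := by
          apply mul_le_mul_of_nonneg_left (inv_anti₀ (by positivity) hden)
            (by positivity)
      _ = 8 * Complex.abs (Gc d q a I) / R ^ 2 := by field_simp; ring
  calc Complex.abs (fc d q a z - 2 * Gc d q a I * (1 + z ^ 2)⁻¹)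
      ≤ Complex.abs (fc d q a z) + Complex.abs (2 * Gc d q a I * (1 + z ^ 2)⁻¹) :=
        Complex.abs.sub_le_add _ _
    _ ≤ 4 * CG d q / R ^ 2 + 8 * Complex.abs (Gc d q a I) / R ^ 2 := add_le_add hfc hpole
    _ = CH d q a / R ^ 2 := by rw [CH]; ring

lemma hc_real_bound (hq : 1 < q) (ha : 0 ≤ a) (x : ℝ) :
    Complex.abs (hc d q a (x : ℂ)) ≤ CR d q a * (1 + x ^ 2)⁻¹ := by
  set m : ℝ := min 1 (q - 1) with hm
  have hm0 : 0 < m := lt_min one_pos (by linarith)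
  have hx2 : (0 : ℝ) < 1 + x ^ 2 := by positivity
  have habs1sq : Complex.abs (1 + I * (x : ℂ)) ^ 2 = 1 + x ^ 2 := by
    rw [Complex.sq_abs, Complex.normSq_apply]
    simp
    ring
  have habs1 : (0 : ℝ) < Complex.abs (1 + I * (x : ℂ)) := by
    nlinarith [Complex.abs.nonneg (1 + I * (x : ℂ))]
  have hWsq : Complex.abs ((q : ℂ) - 1 - I * (x : ℂ)) ^ 2 = (q - 1) ^ 2 + x ^ 2 := by
    rw [Complex.sq_abs, Complex.normSq_apply]
    simp
    ring
  have hW0 : (0 : ℝ) < Complex.abs ((q : ℂ) - 1 - I * (x : ℂ)) := by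
    nlinarith [Complex.abs.nonneg ((q : ℂ) - 1 - I * (x : ℂ)), sq_nonneg x,
      (by linarith : (0:ℝ) < q - 1)]
  -- key: m * (1 + x^2) ≤ W * A
  have hkey : m * (1 + x ^ 2) ≤ Complex.abs ((q : ℂ) - 1 - I * (x : ℂ))
      * Complex.abs (1 + I * (x : ℂ)) := by
    have hsq : (m * (1 + x ^ 2)) ^ 2 ≤ (Complex.abs ((q : ℂ) - 1 - I * (x : ℂ))
        * Complex.abs (1 + I * (x : ℂ))) ^ 2 := by
      rw [mul_pow, mul_pow, hWsq, habs1sq]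
      have hm1 : m ≤ 1 := min_le_left _ _
      have hmq : m ≤ q - 1 := min_le_right _ _
      have h1 : m ^ 2 ≤ (q - 1) ^ 2 := by nlinarith
      have hm2 : m ^ 2 ≤ 1 := by nlinarith
      have h2 : m ^ 2 * x ^ 2 ≤ x ^ 2 := by
        have := mul_le_mul_of_nonneg_right hm2 (sq_nonneg x)
        linarith
      have h3 : m ^ 2 * (1 + x ^ 2) ≤ (q - 1) ^ 2 + x ^ 2 := by nlinarith
      nlinarith [mul_le_mul_of_nonneg_right h3 hx2.le]
    nlinarith [mul_pos hW0 habs1, mul_pos hm0 hx2]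
  have hrel := fc_eq (d := d) (q := q) (a := a) (x : ℂ) (coe_ne_I x) (coe_ne_neg_I x)
  have hhc : hc d q a (x : ℂ) = fc d q a (x : ℂ) - 2 * Gc d q a I * (1 + (x : ℂ) ^ 2)⁻¹ := by
    rw [hrel]; ring
  rw [hhc]
  have hfc : Complex.abs (fc d q a (x : ℂ)) ≤ CG d q * (min 1 (q - 1))⁻¹ * (1 + x ^ 2)⁻¹ := by
    rw [fc, map_mul, map_inv₀]
    have hG := abs_Gc_le (d := d) (a := a) hq ha (z := (x : ℂ)) (by simp)
    calc (Complex.abs (1 + I * (x : ℂ)))⁻¹ * Complex.abs (Gc d q a (x : ℂ))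
        ≤ (Complex.abs (1 + I * (x : ℂ)))⁻¹
            * (CG d q * (Complex.abs ((q : ℂ) - 1 - I * (x : ℂ)))⁻¹) :=
          mul_le_mul_of_nonneg_left hG (by positivity)
      _ = CG d q * (Complex.abs ((q : ℂ) - 1 - I * (x : ℂ))
            * Complex.abs (1 + I * (x : ℂ)))⁻¹ := by
          rw [mul_inv]; ring
      _ ≤ CG d q * (m * (1 + x ^ 2))⁻¹ := by
          apply mul_le_mul_of_nonneg_left (inv_anti₀ (by positivity) hkey) (CG_pos hq).le
      _ = CG d q * (min 1 (q - 1))⁻¹ * (1 + x ^ 2)⁻¹ := by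
          rw [mul_inv, hm]; ring
  have hpole : Complex.abs (2 * Gc d q a I * (1 + (x : ℂ) ^ 2)⁻¹)
      = 2 * Complex.abs (Gc d q a I) * (1 + x ^ 2)⁻¹ := by
    rw [map_mul, map_mul, Complex.abs_two, map_inv₀]
    have : (1 : ℂ) + (x : ℂ) ^ 2 = ((1 + x ^ 2 : ℝ) : ℂ) := by push_cast; ring
    rw [this, Complex.abs_ofReal, abs_of_pos hx2]
  calc Complex.abs (fc d q a (x : ℂ) - 2 * Gc d q a I * (1 + (x : ℂ) ^ 2)⁻¹)
      ≤ Complex.abs (fc d q a (x : ℂ))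
          + Complex.abs (2 * Gc d q a I * (1 + (x : ℂ) ^ 2)⁻¹) := Complex.abs.sub_le_add _ _
    _ ≤ CG d q * (min 1 (q - 1))⁻¹ * (1 + x ^ 2)⁻¹
          + 2 * Complex.abs (Gc d q a I) * (1 + x ^ 2)⁻¹ := by
        rw [hpole]; exact add_le_add_left hfc _
    _ = CR d q a * (1 + x ^ 2)⁻¹ := by rw [CR]; ring

lemma CH_nonneg (hq : 1 < q) (ha : 0 ≤ a) : 0 ≤ CH d q a := by
  have h2 : (0 : ℝ) < max 2 (2 * q) := lt_of_lt_of_le two_pos (le_max_left _ _)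
  have h := hc_decay (d := d) (a := a) hq ha (R := max 2 (2 * q)) le_rfl
    (z := (max 2 (2 * q) : ℝ) * I) (by simp) (by
      rw [map_mul, Complex.abs_I, mul_one, Complex.abs_ofReal]
      exact le_abs_self _)
  have h3 : 0 ≤ CH d q a / (max 2 (2 * q)) ^ 2 := le_trans (Complex.abs.nonneg _) h
  rcases div_nonneg_iff.mp h3 with ⟨h4, _⟩ | ⟨_, h5⟩
  · exact h4
  · nlinarith [pow_pos h2 2]

lemma hc_continuous (hq : 1 < q) : Continuous fun x : ℝ => hc d q a (x : ℂ) := by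
  rw [continuous_iff_continuousAt]
  intro x
  have hxS : (x : ℂ) ∈ S q := by
    simp only [S, mem_setOf_eq, Complex.ofReal_im]
    have : 0 < min 1 (q - 1) := lt_min one_pos (by linarith)
    linarith
  exact ((hc_diffOn hq).differentiableAt (hSopen.mem_nhds hxS)).continuousAt.comp
    Complex.continuous_ofReal.continuousAt

lemma hc_integrable (hq : 1 < q) (ha : 0 ≤ a) :
    Integrable fun x : ℝ => hc d q a (x : ℂ) := by
  refine Integrable.mono' ((integrable_inv_one_add_sq).const_mul (CR d q a))
    (hc_continuous hq).aestronglyMeasurable ?_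
  filter_upwards with x
  rw [Complex.norm_eq_abs]
  exact hc_real_bound hq ha x

lemma integral_hc_zero (hq : 1 < q) (ha : 0 ≤ a) : ∫ x : ℝ, hc d q a (x : ℂ) = 0 := by
  set R0 : ℝ := max 2 (2 * q) with hR0
  have hR0pos : (0 : ℝ) < R0 := lt_of_lt_of_le two_pos (le_max_left _ _)
  have hT1 : Tendsto (fun R : ℝ => ∫ x in -R..R, hc d q a (x : ℂ)) atTop
      (𝓝 (∫ x : ℝ, hc d q a (x : ℂ))) :=
    intervalIntegral_tendsto_integral (hc_integrable hq ha)
      tendsto_neg_atTop_atBot tendsto_id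
  have key : ∀ R : ℝ, R0 ≤ R →
      (∫ x in -R..R, hc d q a (x : ℂ)) =
        (∫ x : ℝ in -R..R, hc d q a ((x : ℂ) + (R : ℂ) * I))
          + I • (∫ y : ℝ in (0:ℝ)..R, hc d q a (((-R : ℝ) : ℂ) + (y : ℂ) * I))
          - I • (∫ y : ℝ in (0:ℝ)..R, hc d q a (((R : ℝ) : ℂ) + (y : ℂ) * I)) := by
    intro R hR
    have hRpos : (0 : ℝ) < R := lt_of_lt_of_le hR0pos hR
    have hsub : (Set.uIcc (-R) R ×ℂ Set.uIcc (0:ℝ) R) ⊆ S q := by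
      intro u hu
      rw [Complex.mem_reProdIm] at hu
      have hu2 := hu.2
      have him : u.im ∈ Set.Icc (0 : ℝ) R := by
        rwa [Set.uIcc_of_le hRpos.le] at hu2
      simp only [S, mem_setOf_eq]
      have : 0 < min 1 (q - 1) := lt_min one_pos (by linarith)
      linarith [him.1]
    have hrect := Complex.integral_boundary_rect_eq_zero_of_differentiableOn
      (hc d q a) ⟨-R, 0⟩ ⟨R, R⟩ ((hc_diffOn hq).mono hsub)
    simp only [Complex.ofReal_zero, zero_mul, add_zero] at hrect
    linear_combination hrect
  have hCH := CH_nonneg (d := d) (a := a) hq ha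
  have hbound : ∀ R : ℝ, R0 ≤ R →
      ‖(∫ x : ℝ in -R..R, hc d q a ((x : ℂ) + (R : ℂ) * I))
          + I • (∫ y : ℝ in (0:ℝ)..R, hc d q a (((-R : ℝ) : ℂ) + (y : ℂ) * I))
          - I • (∫ y : ℝ in (0:ℝ)..R, hc d q a (((R : ℝ) : ℂ) + (y : ℂ) * I))‖
        ≤ 4 * CH d q a / R := by
    intro R hR
    have hRpos : (0 : ℝ) < R := lt_of_lt_of_le hR0pos hR
    have htop : ‖∫ x : ℝ in -R..R, hc d q a ((x : ℂ) + (R : ℂ) * I)‖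
        ≤ CH d q a / R ^ 2 * |R - (-R)| := by
      refine intervalIntegral.norm_integral_le_of_norm_le_const (fun x hx => ?_)
      rw [Complex.norm_eq_abs]
      refine hc_decay hq ha hR (by simp [hRpos.le]) ?_
      have him : ((x : ℂ) + (R : ℂ) * I).im = R := by simp
      calc R = |((x : ℂ) + (R : ℂ) * I).im| := by rw [him, abs_of_pos hRpos]
        _ ≤ _ := Complex.abs_im_le_abs _
    have hside : ∀ s : ℝ, |s| = R →
        ‖∫ y : ℝ in (0:ℝ)..R, hc d q a ((s : ℂ) + (y : ℂ) * I)‖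
          ≤ CH d q a / R ^ 2 * |R - 0| := by
      intro s hs
      refine intervalIntegral.norm_integral_le_of_norm_le_const (fun y hy => ?_)
      rw [Set.uIoc_of_le hRpos.le] at hy
      rw [Complex.norm_eq_abs]
      refine hc_decay hq ha hR (by simp [hy.1.le]) ?_
      calc R = |((s : ℂ) + (y : ℂ) * I).re| := by simp [hs]
        _ ≤ _ := Complex.abs_re_le_abs _
    have h1 := hside (-R) (by rw [abs_neg, abs_of_pos hRpos])
    have h2 := hside R (abs_of_pos hRpos)
    have e1 : |R - (-R)| = 2 * R := by rw [abs_of_pos (by linarith)]; ring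
    have e2 : |R - (0:ℝ)| = R := by rw [sub_zero, abs_of_pos hRpos]
    rw [e1] at htop
    rw [e2] at h1 h2
    calc ‖_ + _ - _‖ ≤ ‖(∫ x : ℝ in -R..R, hc d q a ((x : ℂ) + (R : ℂ) * I))
            + I • (∫ y : ℝ in (0:ℝ)..R, hc d q a (((-R : ℝ) : ℂ) + (y : ℂ) * I))‖
          + ‖I • (∫ y : ℝ in (0:ℝ)..R, hc d q a (((R : ℝ) : ℂ) + (y : ℂ) * I))‖ :=
        norm_sub_le _ _
      _ ≤ ‖∫ x : ℝ in -R..R, hc d q a ((x : ℂ) + (R : ℂ) * I)‖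
          + ‖I • (∫ y : ℝ in (0:ℝ)..R, hc d q a (((-R : ℝ) : ℂ) + (y : ℂ) * I))‖
          + ‖I • (∫ y : ℝ in (0:ℝ)..R, hc d q a (((R : ℝ) : ℂ) + (y : ℂ) * I))‖ := by
        gcongr
        exact norm_add_le _ _
      _ ≤ CH d q a / R ^ 2 * (2 * R) + CH d q a / R ^ 2 * R + CH d q a / R ^ 2 * R := by
        rw [norm_smul, norm_smul, Complex.norm_I, one_mul, one_mul]
        exact add_le_add (add_le_add htop h1) h2
      _ = 4 * CH d q a / R := by field_simp; ring
  have hzero : Tendsto (fun R : ℝ => ∫ x : ℝ in -R..R, hc d q a (x : ℂ)) atTop (𝓝 0) := by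
    refine squeeze_zero_norm' (a := fun R : ℝ => 4 * CH d q a / R) ?_ ?_
    · filter_upwards [eventually_ge_atTop R0] with R hR
      rw [key R hR]
      exact hbound R hR
    · exact tendsto_const_nhds.div_atTop tendsto_id
  exact tendsto_nhds_unique hT1 hzero

end ContourP2

open ContourP2

/-- evaluation, by contour deformation, of the one-dimensional
integral arising in the case `p = 2`. -/
theorem contour_integral_p_two (d : ℕ) (hd : 2 ≤ d) (q : ℝ) (hq : 1 < q)
    (a : ℝ) (ha : 0 ≤ a) :
    ∫ t : ℝ,
        (1 + Complex.I * (t : ℂ))⁻¹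
          * (1 - Complex.I * (t : ℂ)) ^ (((d : ℂ) - 3) / 2)
          * ((q : ℂ) - 1 - Complex.I * (t : ℂ)) ^ (-((d : ℂ) - 1) / 2)
          * Complex.exp ((a : ℂ) *
              (Complex.I * (t : ℂ) - (1 + (t : ℂ) ^ 2) / ((q : ℂ) - 1 - Complex.I * (t : ℂ))))
      = ((2 * Real.pi * 2 ^ (((d : ℝ) - 3) / 2) * q ^ (-((d : ℝ) - 1) / 2)
          * Real.exp (-a) : ℝ) : ℂ) := by
  have hfg : ∀ t : ℝ,
      (1 + Complex.I * (t : ℂ))⁻¹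
          * (1 - Complex.I * (t : ℂ)) ^ (((d : ℂ) - 3) / 2)
          * ((q : ℂ) - 1 - Complex.I * (t : ℂ)) ^ (-((d : ℂ) - 1) / 2)
          * Complex.exp ((a : ℂ) *
              (Complex.I * (t : ℂ) - (1 + (t : ℂ) ^ 2) / ((q : ℂ) - 1 - Complex.I * (t : ℂ))))
        = fc d q a (t : ℂ) := by
    intro t; rw [fc, Gc]; ring
  have hsplit : ∀ t : ℝ, fc d q a (t : ℂ)
      = hc d q a (t : ℂ) + (2 * Gc d q a I) * ((((1 + t ^ 2)⁻¹ : ℝ)) : ℂ) := by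
    intro t
    rw [fc_eq (t : ℂ) (coe_ne_I t) (coe_ne_neg_I t)]
    congr 1
    push_cast
    ring
  have hint2 : Integrable (fun t : ℝ => (2 * Gc d q a I) * ((((1 + t ^ 2)⁻¹ : ℝ)) : ℂ)) :=
    (integrable_inv_one_add_sq.ofReal).const_mul _
  calc ∫ t : ℝ, (1 + Complex.I * (t : ℂ))⁻¹
          * (1 - Complex.I * (t : ℂ)) ^ (((d : ℂ) - 3) / 2)
          * ((q : ℂ) - 1 - Complex.I * (t : ℂ)) ^ (-((d : ℂ) - 1) / 2)
          * Complex.exp ((a : ℂ) *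
              (Complex.I * (t : ℂ) - (1 + (t : ℂ) ^ 2) / ((q : ℂ) - 1 - Complex.I * (t : ℂ))))
      = ∫ t : ℝ, (hc d q a (t : ℂ) + (2 * Gc d q a I) * ((((1 + t ^ 2)⁻¹ : ℝ)) : ℂ)) := by
        congr 1; funext t; rw [hfg t, hsplit t]
    _ = (∫ t : ℝ, hc d q a (t : ℂ))
          + ∫ t : ℝ, (2 * Gc d q a I) * ((((1 + t ^ 2)⁻¹ : ℝ)) : ℂ) :=
        integral_add (hc_integrable hq ha) hint2
    _ = (2 * Gc d q a I) * ((Real.pi : ℝ) : ℂ) := by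
        rw [integral_hc_zero hq ha, zero_add, integral_const_mul]
        congr 1
        have hoR : ∫ t : ℝ, (((1 + t ^ 2)⁻¹ : ℝ) : ℂ) = ((∫ t : ℝ, (1 + t ^ 2)⁻¹ : ℝ) : ℂ) :=
          integral_ofReal
        rw [hoR, integral_univ_inv_one_add_sq]
    _ = ((2 * Real.pi * 2 ^ (((d : ℝ) - 3) / 2) * q ^ (-((d : ℝ) - 1) / 2)
          * Real.exp (-a) : ℝ) : ℂ) := by
        rw [Gc_I]
        rw [Complex.ofReal_mul, Complex.ofReal_mul, Complex.ofReal_mul, Complex.ofReal_mul]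
        rw [Complex.ofReal_cpow (by norm_num : (0:ℝ) ≤ 2),
          Complex.ofReal_cpow (by linarith : (0:ℝ) ≤ q), Complex.ofReal_exp]
        push_cast
        ring
end
end

section
/- Let d ≥ 2 and let q, r ∈ [2,∞) be finite exponents satisfying 2/r + (d-1)/q = (d-1)/2. For a ≥ 0 define J(a) = ∫_ℝ (1+it)^{-(r/(4q))(d-1)(q-2)} (1-it)^{-(r/(4q))(d-1)(q-2) + (d-1)/2} (q-1-it)^{-(d-1)/2} exp(a(it - (1+t²)/(q-1-it))) dt, with principal-branch complex powers. Then for every a ≥ 0: J(a) = 2π · 2^{(d-3)/2} · q^{-(d-1)/2} · e^{-a}. In particular J(a) is a constant multiple of e^{-a}, so radial Gaussians satisfy the Euler–Lagrange equation for the L² → L^r_t L^q_x Strichartz inequalities for all admissible exponent pairs. -/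
open MeasureTheory Complex

open Filter

noncomputable def Hfun (q a p : ℝ) (z : ℂ) : ℂ :=
  (2 - z) ^ (p : ℂ) * ((q : ℂ) - z) ^ (-(p : ℂ)) *
    Complex.exp ((a : ℂ) * ((z * ((q : ℂ) - 1) - q) / ((q : ℂ) - z)))

noncomputable def gfun (q a p : ℝ) (z : ℂ) : ℂ := dslope (Hfun q a p) 0 z * (2 - z)⁻¹

lemma two_sub_ne {z : ℂ} (hz : z.re < 2) : (2 : ℂ) - z ≠ 0 := by
  intro h
  have : ((2:ℂ) - z).re = 0 := by rw [h]; simp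
  simp [Complex.sub_re] at this
  linarith

lemma q_sub_ne {q : ℝ} (hq : 2 < q) {z : ℂ} (hz : z.re < 2) : (q : ℂ) - z ≠ 0 := by
  intro h
  have : ((q:ℂ) - z).re = 0 := by rw [h]; simp
  simp [Complex.sub_re] at this
  linarith

lemma Hdiff (q a p : ℝ) (hq : 2 < q) :
    DifferentiableOn ℂ (Hfun q a p) {z : ℂ | z.re < 2} := by
  intro z hz
  simp only [Set.mem_setOf_eq] at hz
  apply DifferentiableAt.differentiableWithinAt
  apply DifferentiableAt.mul
  · apply DifferentiableAt.mul
    · apply DifferentiableAt.cpow (by fun_prop) (by fun_prop)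
      exact Or.inl (by simp [Complex.sub_re]; linarith)
    · apply DifferentiableAt.cpow (by fun_prop) (by fun_prop)
      exact Or.inl (by simp [Complex.sub_re]; linarith)
  · apply DifferentiableAt.cexp
    apply DifferentiableAt.mul (by fun_prop)
    exact DifferentiableAt.div (by fun_prop) (by fun_prop) (q_sub_ne hq hz)

lemma isOpenU : IsOpen {z : ℂ | z.re < 2} := isOpen_lt Complex.continuous_re continuous_const

lemma gdiff (q a p : ℝ) (hq : 2 < q) :
    DifferentiableOn ℂ (gfun q a p) {z : ℂ | z.re < 2} := by
  apply DifferentiableOn.mul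
  · exact (Complex.differentiableOn_dslope (isOpenU.mem_nhds (by norm_num))).mpr
      (Hdiff q a p hq)
  · intro z hz
    exact (DifferentiableAt.inv (by fun_prop) (two_sub_ne hz)).differentiableWithinAt

lemma gval (q a p : ℝ) {z : ℂ} (hz : z ≠ 0) :
    gfun q a p z = (Hfun q a p z - Hfun q a p 0) / (z * (2 - z)) := by
  rw [gfun, dslope_of_ne _ hz, slope_def_field]
  field_simp
  rw [sub_zero]

lemma Hbound (q a p : ℝ) (hq : 2 < q) (ha : 0 ≤ a) (hp : 0 < p) {z : ℂ} (hz : z.re ≤ 1) :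
    ‖(Hfun q a p z)‖ ≤ (q - 1) ^ p := by
  have hz2 : z.re < 2 := by linarith
  have h2 := two_sub_ne hz2
  have hqz := q_sub_ne hq hz2
  have habs2 : ‖(((2:ℂ) - z) ^ (p : ℂ))‖ = ‖((2:ℂ) - z)‖ ^ p := by
    rw [Complex.norm_cpow_of_ne_zero h2]; simp
  have habsq : ‖(((q:ℂ) - z) ^ (-(p : ℂ)))‖ = ‖((q:ℂ) - z)‖ ^ (-p) := by
    rw [Complex.norm_cpow_of_ne_zero hqz]; simp
  -- bound on exponential
  have hre : ((a : ℂ) * ((z * ((q : ℂ) - 1) - q) / ((q : ℂ) - z))).re ≤ 0 := by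
    have h1 : ((z * ((q : ℂ) - 1) - q) / ((q : ℂ) - z)).re ≤ 0 := by
      rw [Complex.div_re]
      have hnum : (z * ((q : ℂ) - 1) - q).re * ((q:ℂ) - z).re
          + (z * ((q : ℂ) - 1) - q).im * ((q:ℂ) - z).im ≤ 0 := by
        simp only [Complex.sub_re, Complex.sub_im, Complex.mul_re, Complex.mul_im,
          Complex.ofReal_re, Complex.ofReal_im, Complex.one_re, Complex.one_im]
        ring_nf
        nlinarith [sq_nonneg z.im, sq_nonneg (q - z.re)]
      have hns : 0 ≤ Complex.normSq ((q:ℂ) - z) := Complex.normSq_nonneg _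
      have := div_nonpos_of_nonpos_of_nonneg hnum hns
      rw [add_div] at this
      exact this
    have : ((a : ℂ) * ((z * ((q : ℂ) - 1) - q) / ((q : ℂ) - z))).re
        = a * ((z * ((q : ℂ) - 1) - q) / ((q : ℂ) - z)).re := by
      simp [Complex.mul_re]
    rw [this]
    exact mul_nonpos_of_nonneg_of_nonpos ha h1
  have hexp : ‖(Complex.exp ((a : ℂ) * ((z * ((q : ℂ) - 1) - q) / ((q : ℂ) - z))))‖ ≤ 1 := by
    rw [Complex.norm_exp]
    exact Real.exp_le_one_iff.mpr hre
  -- ratio bound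
  have hqz1 : (1 : ℝ) ≤ ‖((q:ℂ) - z)‖ := by
    have : ((q:ℂ) - z).re ≤ ‖((q:ℂ) - z)‖ := Complex.re_le_norm _
    simp only [Complex.sub_re, Complex.ofReal_re] at this
    linarith
  have hratio : ‖((2:ℂ) - z)‖ ≤ (q - 1) * ‖((q:ℂ) - z)‖ := by
    have htri : ‖((2:ℂ) - z)‖ ≤ ‖((q:ℂ) - z)‖ + (q - 2) := by
      have : (2:ℂ) - z = ((q:ℂ) - z) - ((q:ℝ) - 2 : ℝ) := by push_cast; ring
      rw [this]
      calc ‖(((q:ℂ) - z) - ((q:ℝ) - 2 : ℝ))‖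
          ≤ ‖((q:ℂ) - z)‖ + ‖(((q:ℝ) - 2 : ℝ) : ℂ)‖ := by
            exact (norm_sub_le _ _)
        _ = ‖((q:ℂ) - z)‖ + (q - 2) := by
            rw [Complex.norm_real, Real.norm_eq_abs, _root_.abs_of_nonneg (show (0:ℝ) ≤ q - 2 by linarith)]
    nlinarith [norm_nonneg ((q:ℂ) - z)]
  calc ‖(Hfun q a p z)‖
      = ‖((2:ℂ) - z)‖ ^ p * ‖((q:ℂ) - z)‖ ^ (-p)
        * ‖(Complex.exp ((a : ℂ) * ((z * ((q : ℂ) - 1) - q) / ((q : ℂ) - z))))‖ := by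
        rw [Hfun]; rw [norm_mul, norm_mul, habs2, habsq]
    _ ≤ ‖((2:ℂ) - z)‖ ^ p * ‖((q:ℂ) - z)‖ ^ (-p) * 1 := by
        apply mul_le_mul_of_nonneg_left hexp
        positivity
    _ = (‖((2:ℂ) - z)‖ / ‖((q:ℂ) - z)‖) ^ p := by
        rw [mul_one, Real.rpow_neg (norm_nonneg _), Real.div_rpow (norm_nonneg _) (norm_nonneg _)]
        ring
    _ ≤ (q - 1) ^ p := by
        apply Real.rpow_le_rpow (by positivity) _ hp.le
        rw [div_le_iff₀ (by linarith)]
        exact hratio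

lemma abs_z_mul (x y : ℝ) (hx : x ≤ 1) :
    |x| * (2 - x) + y ^ 2 ≤ ‖((x + y * Complex.I) * (2 - (x + y * Complex.I)))‖ := by
  rw [norm_mul]
  have h1 : ‖(x + y * Complex.I)‖ = Real.sqrt (x ^ 2 + y ^ 2) := by
    rw [Complex.norm_def, Complex.normSq_apply]
    simp [Complex.add_re, Complex.add_im]
    ring_nf
  have h2 : ‖(2 - (x + y * Complex.I))‖ = Real.sqrt ((2 - x) ^ 2 + y ^ 2) := by
    rw [Complex.norm_def, Complex.normSq_apply]
    simp [Complex.sub_re, Complex.sub_im, Complex.add_re, Complex.add_im]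
    ring_nf
  rw [h1, h2, ← Real.sqrt_mul (by positivity)]
  have key : (|x| * (2 - x) + y ^ 2) ^ 2 ≤ (x ^ 2 + y ^ 2) * ((2 - x) ^ 2 + y ^ 2) := by
    nlinarith [sq_nonneg ((|x| - (2 - x)) * y), _root_.sq_abs x, abs_nonneg x]
  calc |x| * (2 - x) + y ^ 2 = Real.sqrt ((|x| * (2 - x) + y ^ 2) ^ 2) := by
        rw [Real.sqrt_sq (by nlinarith [abs_nonneg x, sq_nonneg y])]
    _ ≤ Real.sqrt ((x ^ 2 + y ^ 2) * ((2 - x) ^ 2 + y ^ 2)) := Real.sqrt_le_sqrt key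

lemma gbound (q a p : ℝ) (hq : 2 < q) (ha : 0 ≤ a) (hp : 0 < p) {x y : ℝ} (hx : x ≤ 1)
    (hne : (x : ℂ) + y * Complex.I ≠ 0) :
    ‖(gfun q a p (x + y * Complex.I))‖ ≤
      2 * (q - 1) ^ p / (|x| * (2 - x) + y ^ 2) := by
  set z : ℂ := x + y * Complex.I with hzdef
  have hzre : z.re = x := by simp [hzdef]
  have hzre1 : z.re ≤ 1 := by rw [hzre]; exact hx
  have hpos : 0 < |x| * (2 - x) + y ^ 2 := by
    rcases eq_or_ne x 0 with h | h
    · have hy : y ≠ 0 := by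
        intro h2; apply hne; simp [hzdef, h, h2]
      have : 0 < y ^ 2 := by positivity
      rw [h]; simp only [abs_zero, zero_mul, zero_add]; exact this
    · have : 0 < |x| := abs_pos.mpr h
      nlinarith [sq_nonneg y]
  rw [gval q a p hne]
  rw [norm_div]
  have hq1 : (0:ℝ) < q - 1 := by linarith
  apply div_le_div₀ (by positivity) _ hpos (abs_z_mul x y hx)
  calc ‖(Hfun q a p z - Hfun q a p 0)‖
      ≤ ‖(Hfun q a p z)‖ + ‖(Hfun q a p 0)‖ := norm_sub_le _ _
    _ ≤ (q - 1) ^ p + (q - 1) ^ p := by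
        gcongr
        · exact Hbound q a p hq ha hp hzre1
        · exact Hbound q a p hq ha hp (by norm_num)
    _ = 2 * (q - 1) ^ p := by ring

lemma inv_add_sq_le {β : ℝ} (hβ : 0 < β) (y : ℝ) :
    (β + y ^ 2)⁻¹ ≤ max 1 β⁻¹ * (1 + y ^ 2)⁻¹ := by
  have hmin : 0 < min 1 β := lt_min one_pos hβ
  have key : (min 1 β) * (1 + y ^ 2) ≤ β + y ^ 2 := by
    rcases le_total 1 β with h | h
    · rw [min_eq_left h]; nlinarith
    · rw [min_eq_right h]; nlinarith [sq_nonneg y]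
  have hinv : (min 1 β)⁻¹ = max 1 β⁻¹ := by
    rcases le_total 1 β with h | h
    · rw [min_eq_left h, max_eq_left (by rw [inv_le_one_iff₀]; right; exact h), inv_one]
    · rw [min_eq_right h, max_eq_right (by rw [le_inv_comm₀ one_pos hβ]; simpa using h)]
  calc (β + y ^ 2)⁻¹ ≤ ((min 1 β) * (1 + y ^ 2))⁻¹ := by
        apply inv_anti₀ (by positivity) key
    _ = (min 1 β)⁻¹ * (1 + y ^ 2)⁻¹ := by rw [mul_inv]
    _ = max 1 β⁻¹ * (1 + y ^ 2)⁻¹ := by rw [hinv]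

lemma integrable_inv_add_sq {β : ℝ} (hβ : 0 < β) :
    Integrable (fun y : ℝ => (β + y ^ 2)⁻¹) := by
  apply Integrable.mono' (integrable_inv_one_add_sq.const_mul (max 1 β⁻¹))
  · exact ((continuous_const.add (continuous_pow 2)).inv₀ (fun y => by show β + y ^ 2 ≠ 0; positivity)).aestronglyMeasurable
  · filter_upwards with y
    rw [Real.norm_eq_abs, _root_.abs_of_nonneg (by positivity)]
    exact inv_add_sq_le hβ y

lemma gcont (q a p : ℝ) (hq : 2 < q) (x : ℝ) (hx : x ≤ 1) :
    Continuous (fun y : ℝ => gfun q a p (x + y * Complex.I)) := by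
  apply ContinuousOn.comp_continuous (gdiff q a p hq).continuousOn (by continuity)
  intro y
  simp only [Set.mem_setOf_eq, Complex.add_re, Complex.ofReal_re, Complex.mul_re,
    Complex.ofReal_im, Complex.I_re, Complex.I_im]
  simp
  linarith

lemma gint (q a p : ℝ) (hq : 2 < q) (ha : 0 ≤ a) (hp : 0 < p) (x : ℝ) (hx : x ≤ 1)
    (hx0 : x ≠ 0) : Integrable (fun y : ℝ => gfun q a p (x + y * Complex.I)) := by
  have hβ : 0 < |x| * (2 - x) := by
    have : 0 < |x| := abs_pos.mpr hx0
    nlinarith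
  apply Integrable.mono' ((integrable_inv_add_sq hβ).const_mul (2 * (q - 1) ^ p))
  · exact (gcont q a p hq x hx).aestronglyMeasurable
  · filter_upwards with y
    have hne : (x : ℂ) + y * Complex.I ≠ 0 := by
      intro h
      have : ((x : ℂ) + y * Complex.I).re = 0 := by rw [h]; simp
      simp at this
      exact hx0 this
    calc ‖(gfun q a p (x + y * Complex.I))‖
        ≤ 2 * (q - 1) ^ p / (|x| * (2 - x) + y ^ 2) := gbound q a p hq ha hp hx hne
      _ = 2 * (q - 1) ^ p * (|x| * (2 - x) + y ^ 2)⁻¹ := by rw [div_eq_mul_inv]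

lemma rect_subset {S T : ℝ} (hS : 1 ≤ S) :
    (Set.uIcc (-S) 1 ×ℂ Set.uIcc (-T) T) ⊆ {z : ℂ | z.re < 2} := by
  intro u hu
  rw [Complex.mem_reProdIm] at hu
  have h1 : u.re ∈ Set.uIcc (-S) 1 := hu.1
  rw [Set.uIcc_of_le (by linarith)] at h1
  simp only [Set.mem_setOf_eq]
  have := h1.2
  linarith

lemma Veq (q a p : ℝ) (hq : 2 < q) (ha : 0 ≤ a) (hp : 0 < p) (S : ℝ) (hS : 1 ≤ S) :
    ∫ y : ℝ, gfun q a p (1 + y * Complex.I) = ∫ y : ℝ, gfun q a p (-S + y * Complex.I) := by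
  set g := gfun q a p with hg
  set M := (q - 1) ^ p with hM
  have hM0 : 0 ≤ M := by
    have hq1 : (0:ℝ) < q - 1 := by linarith
    rw [hM]; positivity
  -- the rectangle identity for each T
  have hrect : ∀ T : ℝ,
      ((((∫ x : ℝ in (-S)..1, g (x + (-T : ℝ) * Complex.I)) -
        ∫ x : ℝ in (-S)..1, g (x + (T : ℝ) * Complex.I)) +
        Complex.I • ∫ y : ℝ in (-T)..T, g (1 + y * Complex.I)) -
        Complex.I • ∫ y : ℝ in (-T)..T, g ((-S : ℝ) + y * Complex.I)) = 0 := by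
    intro T
    have := Complex.integral_boundary_rect_eq_zero_of_differentiableOn g
      ((-S : ℝ) + (-T : ℝ) * Complex.I) ((1 : ℝ) + (T : ℝ) * Complex.I)
      (((gdiff q a p hq).mono (by
        simp only [Complex.add_re, Complex.add_im, Complex.ofReal_re, Complex.ofReal_im,
          Complex.mul_re, Complex.mul_im, Complex.I_re, Complex.I_im]
        norm_num
        exact rect_subset hS)))
    simpa using this
  -- horizontal bounds
  have hhor : ∀ (T : ℝ), 1 ≤ T → ∀ (s : ℝ), s = T ∨ s = -T →
      ‖∫ x : ℝ in (-S)..1, g (x + (s : ℝ) * Complex.I)‖ ≤ 2 * M / T ^ 2 * (1 + S) := by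
    intro T hT s hs
    have hs2 : s ^ 2 = T ^ 2 := by rcases hs with h | h <;> rw [h] <;> ring
    have hsne : s ≠ 0 := by rcases hs with h | h <;> rw [h] <;> intro h2 <;> nlinarith
    have := intervalIntegral.norm_integral_le_of_norm_le_const
      (C := 2 * M / T ^ 2) (f := fun x : ℝ => g (x + (s : ℝ) * Complex.I)) (a := -S) (b := 1) ?_
    · calc ‖∫ x : ℝ in (-S)..1, g (x + (s : ℝ) * Complex.I)‖ ≤ 2 * M / T ^ 2 * |1 - (-S)| := this
        _ = 2 * M / T ^ 2 * (1 + S) := by rw [_root_.abs_of_nonneg (by linarith)]; ring_nf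
    · intro x hx
      rw [Set.uIoc_of_le (by linarith)] at hx
      have hx1 : x ≤ 1 := hx.2
      have hne : (x : ℂ) + s * Complex.I ≠ 0 := by
        intro h
        have : ((x : ℂ) + s * Complex.I).im = 0 := by rw [h]; simp
        simp at this
        exact hsne this
      calc ‖g (x + (s : ℝ) * Complex.I)‖ = ‖(g (x + (s : ℝ) * Complex.I))‖ := rfl
        _ ≤ 2 * M / (|x| * (2 - x) + s ^ 2) := gbound q a p hq ha hp hx1 hne
        _ ≤ 2 * M / T ^ 2 := by
            apply div_le_div_of_nonneg_left (by positivity) (by positivity)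
            rw [hs2]
            nlinarith [abs_nonneg x]
  have hzero : Tendsto (fun T : ℝ => 2 * M / T ^ 2 * (1 + S)) atTop (nhds 0) := by
    have h1 : Tendsto (fun T : ℝ => 2 * M * (1 + S) / T ^ 2) atTop (nhds 0) :=
      Filter.Tendsto.div_atTop tendsto_const_nhds (Filter.tendsto_pow_atTop (by norm_num))
    convert h1 using 2 with T
    ring
  have h1 : Tendsto (fun T : ℝ => ∫ x : ℝ in (-S)..1, g (x + (-T : ℝ) * Complex.I)) atTop (nhds 0) := by
    apply squeeze_zero_norm' _ hzero
    filter_upwards [eventually_ge_atTop (1:ℝ)] with T hT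
    exact hhor T hT (-T) (Or.inr rfl)
  have h2 : Tendsto (fun T : ℝ => ∫ x : ℝ in (-S)..1, g (x + (T : ℝ) * Complex.I)) atTop (nhds 0) := by
    apply squeeze_zero_norm' _ hzero
    filter_upwards [eventually_ge_atTop (1:ℝ)] with T hT
    exact hhor T hT T (Or.inl rfl)
  have h3 : Tendsto (fun T : ℝ => ∫ y : ℝ in (-T)..T, g (1 + y * Complex.I)) atTop
      (nhds (∫ y : ℝ, g (1 + y * Complex.I))) :=
    MeasureTheory.intervalIntegral_tendsto_integral
      (gint q a p hq ha hp 1 le_rfl one_ne_zero)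
      Filter.tendsto_neg_atTop_atBot tendsto_id
  have h4 : Tendsto (fun T : ℝ => ∫ y : ℝ in (-T)..T, g ((-S : ℝ) + y * Complex.I)) atTop
      (nhds (∫ y : ℝ, g ((-S : ℝ) + y * Complex.I))) :=
    MeasureTheory.intervalIntegral_tendsto_integral
      (gint q a p hq ha hp (-S) (by linarith) (by intro h; linarith))
      Filter.tendsto_neg_atTop_atBot tendsto_id
  have hcomb : Tendsto (fun T : ℝ =>
      ((((∫ x : ℝ in (-S)..1, g (x + (-T : ℝ) * Complex.I)) -
        ∫ x : ℝ in (-S)..1, g (x + (T : ℝ) * Complex.I)) +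
        Complex.I • ∫ y : ℝ in (-T)..T, g (1 + y * Complex.I)) -
        Complex.I • ∫ y : ℝ in (-T)..T, g ((-S : ℝ) + y * Complex.I))) atTop
      (nhds (((0 - 0) + Complex.I • ∫ y : ℝ, g (1 + y * Complex.I)) -
        Complex.I • ∫ y : ℝ, g ((-S : ℝ) + y * Complex.I))) :=
    (((h1.sub h2).add (h3.const_smul Complex.I)).sub (h4.const_smul Complex.I))
  have := tendsto_nhds_unique hcomb (by
    rw [show (fun T : ℝ =>
      ((((∫ x : ℝ in (-S)..1, g (x + (-T : ℝ) * Complex.I)) -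
        ∫ x : ℝ in (-S)..1, g (x + (T : ℝ) * Complex.I)) +
        Complex.I • ∫ y : ℝ in (-T)..T, g (1 + y * Complex.I)) -
        Complex.I • ∫ y : ℝ in (-T)..T, g ((-S : ℝ) + y * Complex.I))) = fun _ => (0:ℂ) from
      funext hrect]
    exact tendsto_const_nhds)
  simp only [smul_eq_mul] at this
  have hI : Complex.I * (∫ y : ℝ, g (1 + y * Complex.I)) =
      Complex.I * ∫ y : ℝ, g ((-S : ℝ) + y * Complex.I) := by
    linear_combination this
  have h := mul_left_cancel₀ Complex.I_ne_zero hI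
  push_cast at h ⊢
  exact h

lemma integral_inv_sq_add_sq' {S : ℝ} (hS : 0 < S) :
    ∫ y : ℝ, (S ^ 2 + y ^ 2)⁻¹ = Real.pi / S := by
  have h1 : ∀ y : ℝ, (S ^ 2 + y ^ 2)⁻¹ = S⁻¹ * S⁻¹ * (1 + (S⁻¹ * y) ^ 2)⁻¹ := by
    intro y
    have hne : S ≠ 0 := hS.ne'
    field_simp
  simp_rw [h1]
  rw [MeasureTheory.integral_const_mul,
    MeasureTheory.Measure.integral_comp_mul_left (fun u => (1 + u ^ 2)⁻¹) S⁻¹,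
    integral_univ_inv_one_add_sq, inv_inv, _root_.abs_of_pos hS, smul_eq_mul]
  field_simp

lemma V1_zero (q a p : ℝ) (hq : 2 < q) (ha : 0 ≤ a) (hp : 0 < p) :
    ∫ y : ℝ, gfun q a p (1 + y * Complex.I) = 0 := by
  set M := (q - 1) ^ p with hM
  have hM0 : 0 ≤ M := by
    have hq1 : (0:ℝ) < q - 1 := by linarith
    rw [hM]; positivity
  have hlim : Tendsto (fun S : ℝ => ∫ y : ℝ, gfun q a p (-S + y * Complex.I)) atTop (nhds 0) := by
    apply squeeze_zero_norm' _ (show Tendsto (fun S : ℝ => 2 * M * Real.pi / S) atTop (nhds 0) from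
      Filter.Tendsto.div_atTop tendsto_const_nhds tendsto_id)
    filter_upwards [eventually_ge_atTop (1:ℝ)] with S hS
    have hS0 : 0 < S := by linarith
    have hint := gint q a p hq ha hp (-S) (by linarith) (by intro h; linarith)
    have hbd : ∀ y : ℝ, ‖gfun q a p ((-S : ℝ) + y * Complex.I)‖ ≤ 2 * M * (S ^ 2 + y ^ 2)⁻¹ := by
      intro y
      have hne : ((-S : ℝ) : ℂ) + y * Complex.I ≠ 0 := by
        intro h
        have : (((-S : ℝ) : ℂ) + y * Complex.I).re = 0 := by rw [h]; simp
        simp at this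
        linarith
      calc ‖gfun q a p ((-S : ℝ) + y * Complex.I)‖
          ≤ 2 * M / (|(-S : ℝ)| * (2 - (-S)) + y ^ 2) := gbound q a p hq ha hp (by linarith) hne
        _ ≤ 2 * M / (S ^ 2 + y ^ 2) := by
            apply div_le_div_of_nonneg_left (by positivity) (by positivity)
            rw [abs_neg, _root_.abs_of_pos hS0]
            nlinarith
        _ = 2 * M * (S ^ 2 + y ^ 2)⁻¹ := by rw [div_eq_mul_inv]
    push_cast at hbd hint
    calc ‖∫ y : ℝ, gfun q a p (-S + y * Complex.I)‖
        ≤ ∫ y : ℝ, ‖gfun q a p (-S + y * Complex.I)‖ :=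
          MeasureTheory.norm_integral_le_integral_norm _
      _ ≤ ∫ y : ℝ, 2 * M * (S ^ 2 + y ^ 2)⁻¹ := by
          apply MeasureTheory.integral_mono hint.norm
            ((integrable_inv_add_sq (by positivity : (0:ℝ) < S ^ 2)).const_mul _) hbd
      _ = 2 * M * (Real.pi / S) := by
          rw [MeasureTheory.integral_const_mul, integral_inv_sq_add_sq' hS0]
      _ = 2 * M * Real.pi / S := by ring
  have hconst : Tendsto (fun S : ℝ => ∫ y : ℝ, gfun q a p (1 + y * Complex.I)) atTop
      (nhds 0) := by
    apply hlim.congr'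
    filter_upwards [eventually_ge_atTop (1:ℝ)] with S hS
    exact (Veq q a p hq ha hp S hS).symm
  exact (tendsto_nhds_unique hconst tendsto_const_nhds).symm

/-- the contour integral `J(a)` arising in the mixed-norm
(Strichartz) case is a constant multiple of `e^{-a}` for every admissible pair
`(q, r)`; hence radial Gaussians satisfy the Euler-Lagrange equation for the
`L² → L^r_t L^q_x` Strichartz inequalities. -/
theorem mixed_norm_contour_integral (d : ℕ) (hd : 2 ≤ d) (q r : ℝ)
    (hq : 2 ≤ q) (hr : 2 ≤ r)
    (hadm : 2 / r + ((d : ℝ) - 1) / q = ((d : ℝ) - 1) / 2)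
    (a : ℝ) (ha : 0 ≤ a) :
    ∫ t : ℝ,
        (1 + Complex.I * (t : ℂ)) ^ ((-(r / (4 * q)) * (((d : ℝ) - 1) * (q - 2)) : ℝ) : ℂ)
          * (1 - Complex.I * (t : ℂ)) ^
              ((-(r / (4 * q)) * (((d : ℝ) - 1) * (q - 2)) + ((d : ℝ) - 1) / 2 : ℝ) : ℂ)
          * ((q : ℂ) - 1 - Complex.I * (t : ℂ)) ^ (-((d : ℂ) - 1) / 2)
          * Complex.exp ((a : ℂ) *
              (Complex.I * (t : ℂ) - (1 + (t : ℂ) ^ 2) / ((q : ℂ) - 1 - Complex.I * (t : ℂ))))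
      = ((2 * Real.pi * 2 ^ (((d : ℝ) - 3) / 2) * q ^ (-((d : ℝ) - 1) / 2)
          * Real.exp (-a) : ℝ) : ℂ) := by
  have hd2 : (2:ℝ) ≤ (d:ℝ) := by exact_mod_cast hd
  have hD : (1:ℝ) ≤ (d:ℝ) - 1 := by linarith
  have hr0 : (0:ℝ) < r := by linarith
  have hq0 : (0:ℝ) < q := by linarith
  have h3 : ((d:ℝ)-1)/q < ((d:ℝ)-1)/2 := by
    have h2 : 0 < 2/r := by positivity
    linarith
  have hq2 : 2 < q := by
    by_contra h
    push_neg at h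
    have : ((d:ℝ)-1)/2 ≤ ((d:ℝ)-1)/q := by gcongr <;> linarith
    linarith
  have key : r * (((d:ℝ)-1) * (q-2)) = 4*q := by
    have h := hadm
    field_simp at h
    nlinarith [h]
  have e1 : -(r / (4 * q)) * (((d : ℝ) - 1) * (q - 2)) = -1 := by
    field_simp
    linarith [key]
  set p : ℝ := ((d:ℝ) - 1) / 2 with hpdef
  have hp : 0 < p := by rw [hpdef]; linarith
  -- pointwise identity
  have hpoint : ∀ t : ℝ,
      (1 + Complex.I * (t : ℂ)) ^ ((-(r / (4 * q)) * (((d : ℝ) - 1) * (q - 2)) : ℝ) : ℂ)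
          * (1 - Complex.I * (t : ℂ)) ^
              ((-(r / (4 * q)) * (((d : ℝ) - 1) * (q - 2)) + ((d : ℝ) - 1) / 2 : ℝ) : ℂ)
          * ((q : ℂ) - 1 - Complex.I * (t : ℂ)) ^ (-((d : ℂ) - 1) / 2)
          * Complex.exp ((a : ℂ) *
              (Complex.I * (t : ℂ) - (1 + (t : ℂ) ^ 2) / ((q : ℂ) - 1 - Complex.I * (t : ℂ))))
        = Hfun q a p 0 * ((((1:ℝ) + t ^ 2)⁻¹ : ℝ) : ℂ)
          + gfun q a p (1 + t * Complex.I) := by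
    intro t
    set z : ℂ := 1 + t * Complex.I with hzdef
    have hz0 : z ≠ 0 := by
      intro h
      have : z.re = 0 := by rw [h]; simp
      simp [hzdef] at this
    have h2z : (2:ℂ) - z ≠ 0 := two_sub_ne (by simp [hzdef])
    have hqz : (q:ℂ) - z ≠ 0 := q_sub_ne hq2 (by simp [hzdef])
    have hIz : 1 + Complex.I * (t:ℂ) = z := by rw [hzdef]; ring
    have h1mz : 1 - Complex.I * (t:ℂ) = 2 - z := by rw [hzdef]; ring
    have hqmz : (q:ℂ) - 1 - Complex.I * (t:ℂ) = (q:ℂ) - z := by rw [hzdef]; ring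
    have hden : ((1:ℂ) + (t:ℂ)^2) = z * (2 - z) := by
      have hI2 : (Complex.I)^2 = -1 := Complex.I_sq
      rw [hzdef]
      linear_combination ((t:ℂ)^2) * hI2
    have hdenne : ((1:ℂ) + (t:ℂ)^2) ≠ 0 := by rw [hden]; exact mul_ne_zero hz0 h2z
    -- exponent rewrites
    rw [e1, hIz, h1mz, hqmz]
    have hexp2 : ((-1 + ((d:ℝ)-1)/2 : ℝ) : ℂ) = -1 + (p : ℂ) := by
      rw [hpdef]; push_cast; ring
    rw [hexp2]
    have hexp3 : -((d:ℂ)-1)/2 = -(p : ℂ) := by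
      rw [hpdef]; push_cast; ring
    rw [hexp3]
    have hcpow1 : z ^ (((-1 : ℝ)) : ℂ) = z⁻¹ := by
      push_cast
      exact Complex.cpow_neg_one z
    rw [hcpow1]
    have hcpow2 : (2 - z) ^ ((-1 : ℂ) + (p:ℂ)) = (2 - z)⁻¹ * (2 - z) ^ (p:ℂ) := by
      rw [Complex.cpow_add _ _ h2z, Complex.cpow_neg_one]
    rw [hcpow2]
    -- exponential argument
    have hexparg : (a : ℂ) * (Complex.I * (t : ℂ) - (1 + (t : ℂ) ^ 2) / ((q : ℂ) - z))
        = (a : ℂ) * ((z * ((q : ℂ) - 1) - q) / ((q : ℂ) - z)) := by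
      congr 1
      have hIt : Complex.I * (t:ℂ) = z - 1 := by rw [hzdef]; ring
      rw [hIt, hden]
      field_simp
      ring
    rw [hexparg]
    -- assemble
    rw [gval q a p hz0, Hfun, Hfun]
    have hH0 : ((2:ℂ) - 0) ^ (p:ℂ) * ((q:ℂ) - 0) ^ (-(p:ℂ)) *
        Complex.exp ((a : ℂ) * ((0 * ((q : ℂ) - 1) - q) / ((q : ℂ) - 0))) ≠ 0 ∨ True := Or.inr trivial
    push_cast
    rw [hden]
    field_simp
    ring
  -- now the integral computation
  have hint1 : Integrable (fun t : ℝ => Hfun q a p 0 * ((((1:ℝ) + t ^ 2)⁻¹ : ℝ) : ℂ)) :=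
    (MeasureTheory.Integrable.ofReal (𝕜 := ℂ) integrable_inv_one_add_sq).const_mul _
  have hint2 : Integrable (fun t : ℝ => gfun q a p (1 + t * Complex.I)) := by
    have := gint q a p hq2 ha hp 1 le_rfl one_ne_zero
    simpa using this
  rw [MeasureTheory.integral_congr_ae (Filter.Eventually.of_forall hpoint),
    MeasureTheory.integral_add hint1 hint2, V1_zero q a p hq2 ha hp, add_zero,
    MeasureTheory.integral_const_mul]
  have hval : (∫ t : ℝ, ((((1:ℝ) + t ^ 2)⁻¹ : ℝ) : ℂ)) = (Real.pi : ℂ) := by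
    rw [show (fun t : ℝ => ((((1:ℝ) + t ^ 2)⁻¹ : ℝ) : ℂ))
        = fun t : ℝ => (RCLike.ofReal (K := ℂ) ((1 + t ^ 2)⁻¹)) from rfl,
      integral_ofReal (𝕜 := ℂ), integral_univ_inv_one_add_sq]
    rfl
  rw [hval]
  -- compute Hfun q a p 0
  have hqC : (q:ℂ) ≠ 0 := by exact_mod_cast hq0.ne'
  have h3 : ((a:ℂ) * ((0 * ((q:ℂ) - 1) - q) / ((q:ℂ) - 0))) = ((-a : ℝ) : ℂ) := by
    push_cast
    field_simp
    ring
  have hH0 : Hfun q a p 0 = ((2 ^ p * q ^ (-p) * Real.exp (-a) : ℝ) : ℂ) := by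
    rw [Hfun, h3]
    have h1 : (2:ℂ) - 0 = ((2:ℝ):ℂ) := by norm_num
    have h2 : (q:ℂ) - 0 = ((q:ℝ):ℂ) := by norm_num
    have h4 : -(p:ℂ) = ((-p : ℝ) : ℂ) := by push_cast; ring
    rw [h1, h2, h4, ← Complex.ofReal_cpow (by norm_num) p, ← Complex.ofReal_cpow hq0.le (-p),
      ← Complex.ofReal_exp, ← Complex.ofReal_mul, ← Complex.ofReal_mul]
  rw [hH0, ← Complex.ofReal_mul]
  rw [Complex.ofReal_inj]
  have h2p : (2:ℝ) ^ p = 2 * 2 ^ (((d:ℝ) - 3) / 2) := by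
    rw [hpdef, show ((d:ℝ)-1)/2 = ((d:ℝ)-3)/2 + 1 by ring, Real.rpow_add two_pos,
      Real.rpow_one]
    ring
  have hqp : q ^ (-p) = q ^ (-((d:ℝ) - 1) / 2) := by rw [hpdef]; ring_nf
  rw [h2p, hqp]
  ring
end
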